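/- arXiv:1302.3759 — 7 statements merged into one kernel-verified Lean document; each statement's English description precedes it below -/
import Mathlib

section
/- Let (a_n) be a sequence of real numbers such that the Cesàro averages (1/n)·∑_{i=1}^n a_i converge to a limit a. Let (n_k) and (t_k) be sequences of natural numbers with t_k ≥ 1 for all k, n_k → ∞, and limsup_k n_k/t_k < ∞. Then (1/t_k)·∑_{i=n_k+1}^{n_k+t_k} a_i → a as k → ∞. -/
open Filter Finset

/-- If the Cesàro averages of `(a_n)` converge to `a`, and `(n_k)`, `(t_k)`
are sequences of naturals with `t_k ≥ 1`, `n_k → ∞`, and `n_k ≤ C·t_k` eventually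
(i.e. `limsup n_k/t_k < ∞`), then the averages of `a` over the windows
`(n_k, n_k + t_k]` converge to `a` as well. -/
theorem window_average_tendsto
    (a : ℕ → ℝ) (A : ℝ)
    (ha : Tendsto (fun n : ℕ => (∑ i ∈ Finset.range n, a i) / n) atTop (nhds A))
    (n t : ℕ → ℕ)
    (ht : ∀ k, 1 ≤ t k)
    (hn : Tendsto n atTop atTop)
    (hC : ∃ C : ℝ, ∀ᶠ k in atTop, (n k : ℝ) ≤ C * t k) :
    Tendsto (fun k : ℕ => (∑ i ∈ Finset.Ico (n k) (n k + t k), a i) / (t k))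
      atTop (nhds A) := by
  obtain ⟨C, hCe⟩ := hC
  set C' : ℝ := max C 0 with hC'
  have hCe' : ∀ᶠ k in atTop, (n k : ℝ) ≤ C' * t k := by
    filter_upwards [hCe] with k hk
    exact hk.trans (mul_le_mul_of_nonneg_right (le_max_left _ _) (by positivity))
  set b : ℕ → ℝ := fun m => (∑ i ∈ Finset.range m, a i) / m - A with hb
  have hb0 : Tendsto b atTop (nhds 0) := by
    simpa [hb] using ha.sub (tendsto_const_nhds (x := A))
  have hnt : Tendsto (fun k => n k + t k) atTop atTop :=
    tendsto_atTop_mono (fun k => Nat.le_add_right _ _) hn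
  have he1 : Tendsto (fun k => b (n k + t k)) atTop (nhds 0) := hb0.comp hnt
  have he2 : Tendsto (fun k => b (n k)) atTop (nhds 0) := hb0.comp hn
  rw [← tendsto_sub_nhds_zero_iff]
  have habs : Tendsto (fun k =>
      |(∑ i ∈ Finset.Ico (n k) (n k + t k), a i) / (t k) - A|) atTop (nhds 0) := by
    have hg : Tendsto (fun k => (C' + 1) * |b (n k + t k)| + C' * |b (n k)|)
        atTop (nhds 0) := by
      have := (((tendsto_const_nhds (x := (C' + 1))).mul he1.abs).add
        ((tendsto_const_nhds (x := C')).mul he2.abs))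
      simpa using this
    apply squeeze_zero' (Eventually.of_forall fun k => abs_nonneg _) _ hg
    have hn1 : ∀ᶠ k in atTop, 1 ≤ n k := hn.eventually_ge_atTop 1
    filter_upwards [hCe', hn1] with k hk hk1
    have htk : (0 : ℝ) < t k := by exact_mod_cast ht k
    have hnk : (0 : ℝ) < n k := by exact_mod_cast hk1
    have hntk : (0 : ℝ) < (n k : ℝ) + t k := by positivity
    have hsum : (∑ i ∈ Finset.Ico (n k) (n k + t k), a i)
        = (∑ i ∈ Finset.range (n k + t k), a i) - (∑ i ∈ Finset.range (n k), a i) := by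
      rw [Finset.sum_Ico_eq_sub _ (Nat.le_add_right _ _)]
    have key : (∑ i ∈ Finset.Ico (n k) (n k + t k), a i) / (t k) - A
        = (((n k : ℝ) + t k) / t k) * b (n k + t k) - ((n k : ℝ) / t k) * b (n k) := by
      rw [hsum]
      simp only [hb, Nat.cast_add]
      field_simp
      ring
    rw [key]
    have h1 : |(((n k : ℝ) + t k) / t k) * b (n k + t k)|
        ≤ (C' + 1) * |b (n k + t k)| := by
      rw [abs_mul]
      apply mul_le_mul_of_nonneg_right _ (abs_nonneg _)
      rw [abs_of_pos (by positivity)]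
      rw [div_le_iff₀ htk]
      nlinarith
    have h2 : |((n k : ℝ) / t k) * b (n k)| ≤ C' * |b (n k)| := by
      rw [abs_mul]
      apply mul_le_mul_of_nonneg_right _ (abs_nonneg _)
      rw [abs_of_pos (by positivity)]
      rw [div_le_iff₀ htk]
      nlinarith
    calc |_ - _| ≤ |(((n k : ℝ) + t k) / t k) * b (n k + t k)|
          + |((n k : ℝ) / t k) * b (n k)| := abs_sub _ _
      _ ≤ _ := add_le_add h1 h2
  exact tendsto_zero_iff_abs_tendsto_zero _ |>.mpr habs
end

section
/- For the substitution θ: 0 ↦ 00001, 1 ↦ 1110, there is no balanced pair of nonempty prefixes of the two fixed points: if A is a nonempty prefix of the fixed point u* = θ^∞(0) and B is a nonempty prefix of the fixed point v* = θ^∞(1) with N₀(A) = N₀(B) and N₁(A) = N₁(B) (so in particular |A| = |B|), then no such pair (A,B) exists. -/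
/-- A substitution on an alphabet `α`, extended to words by concatenation. -/
def substApply {α : Type*} (σ : α → List α) (w : List α) : List α := w.flatMap σ

/-- `x : ℕ → α` is the one-sided fixed point of the substitution `σ` starting with the
letter `a`:  every iterate `σᵏ(a)` is a prefix of `x`. -/
def IsFixPt {α : Type*} (σ : α → List α) (a : α) (x : ℕ → α) : Prop :=
  ∀ k i (h : i < ((substApply σ)^[k] [a]).length), x i = ((substApply σ)^[k] [a])[i]

/-- The prefix of length `n` of the sequence `x`. -/
def prefixN {α : Type*} (x : ℕ → α) (n : ℕ) : List α := List.ofFn (fun i : Fin n => x i)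

/-- The substitution `θ : 0 ↦ 00001, 1 ↦ 1110`. -/
def θNP : Bool → List Bool := fun b =>
  if b then [true, true, true, false] else [false, false, false, false, true]

namespace NB

lemma prefixN_length (x : ℕ → Bool) (n : ℕ) : (prefixN x n).length = n := by simp [prefixN]

lemma prefixN_getElem (x : ℕ → Bool) (n i : ℕ) (h : i < (prefixN x n).length) :
    (prefixN x n)[i] = x i := by simp [prefixN]

lemma prefixN_succ (x : ℕ → Bool) (n : ℕ) : prefixN x (n+1) = prefixN x n ++ [x n] := by
  apply List.ext_getElem (by simp [prefixN_length])
  intro i h1 h2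
  rw [prefixN_getElem]
  rcases Nat.lt_or_ge i n with h | h
  · rw [List.getElem_append_left (by simpa [prefixN_length] using h), prefixN_getElem]
  · have hi : i = n := by have := prefixN_length x (n+1); omega
    subst hi
    rw [List.getElem_append_right (by simp [prefixN_length])]
    simp [prefixN_length]

lemma prefixN_take (x : ℕ → Bool) {n m : ℕ} (h : n ≤ m) :
    (prefixN x m).take n = prefixN x n := by
  apply List.ext_getElem (by simp [prefixN_length]; omega)
  intro i h1 h2
  simp only [List.getElem_take, prefixN_getElem]

lemma prefix_eq (x : ℕ → Bool) {w t : List Bool} {m : ℕ} (h : w ++ t = prefixN x m) :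
    w = prefixN x w.length := by
  have hle : w.length ≤ m := by
    have := congrArg List.length h; simp [prefixN_length] at this; omega
  rw [← prefixN_take x hle, ← h, List.take_left]

lemma iter_eq_prefixN {a : Bool} {x : ℕ → Bool} (hx : IsFixPt θNP a x) (k : ℕ) :
    (substApply θNP)^[k] [a] = prefixN x (((substApply θNP)^[k] [a]).length) := by
  apply List.ext_getElem (by simp [prefixN_length])
  intro i h1 h2
  rw [prefixN_getElem]; exact (hx k i h1).symm

lemma fixpt_zero {a : Bool} {x : ℕ → Bool} (hx : IsFixPt θNP a x) : x 0 = a := by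
  have := hx 0 0 (by simp)
  simpa using this

lemma subst_len_le (w : List Bool) : 4 * w.length ≤ (substApply θNP w).length := by
  induction w with
  | nil => simp [substApply]
  | cons b t ih =>
      have h : substApply θNP (b :: t) = θNP b ++ substApply θNP t := rfl
      rw [h, List.length_append, List.length_cons]
      cases b <;> simp [θNP] at * <;> omega

lemma iter_len {a : Bool} (k : ℕ) : k + 1 ≤ (((substApply θNP)^[k] [a]).length) := by
  induction k with
  | zero => simp
  | succ k ih =>
      rw [Function.iterate_succ_apply']
      have := subst_len_le ((substApply θNP)^[k] [a])
      omega

lemma subst_prefixN {a : Bool} {x : ℕ → Bool} (hx : IsFixPt θNP a x) (k : ℕ) :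
    substApply θNP (prefixN x k) =
      prefixN x ((substApply θNP (prefixN x k)).length) := by
  have hkle : k ≤ ((substApply θNP)^[k] [a]).length := by have := iter_len (a := a) k; omega
  have hpre : prefixN x k = ((substApply θNP)^[k] [a]).take k := by
    conv_rhs => rw [iter_eq_prefixN hx k, prefixN_take x hkle]
  have hsplit : substApply θNP ((substApply θNP)^[k] [a]) =
      substApply θNP (prefixN x k) ++ substApply θNP (((substApply θNP)^[k] [a]).drop k) := by
    simp only [substApply]
    rw [hpre, show (((substApply θNP)^[k] [a]).take k).flatMap θNP ++
        (((substApply θNP)^[k] [a]).drop k).flatMap θNP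
        = ((((substApply θNP)^[k] [a]).take k) ++ (((substApply θNP)^[k] [a]).drop k)).flatMap θNP
        from (List.flatMap_append ..).symm, List.take_append_drop]
  have hiter : substApply θNP ((substApply θNP)^[k] [a]) =
      prefixN x ((substApply θNP ((substApply θNP)^[k] [a])).length) := by
    rw [show substApply θNP ((substApply θNP)^[k] [a]) = (substApply θNP)^[k+1] [a]
        from (Function.iterate_succ_apply' ..).symm]
    exact iter_eq_prefixN hx (k+1)
  exact prefix_eq x (hsplit.symm.trans hiter)
lemma count_true_subst (w : List Bool) :
    (substApply θNP w).count true = w.length + 2 * w.count true := by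
  induction w with
  | nil => simp [substApply]
  | cons b t ih =>
      have h : substApply θNP (b :: t) = θNP b ++ substApply θNP t := rfl
      rw [h, List.count_append, ih]
      cases b <;> simp [θNP, List.count_cons] <;> ring

lemma len_subst (w : List Bool) :
    (substApply θNP w).length + w.count true = 5 * w.length := by
  induction w with
  | nil => simp [substApply]
  | cons b t ih =>
      have h : substApply θNP (b :: t) = θNP b ++ substApply θNP t := rfl
      rw [h, List.length_append]
      cases b <;> simp [θNP, List.count_cons] at * <;> omega

lemma count_false_add_true (l : List Bool) : l.count false + l.count true = l.length := by
  induction l with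
  | nil => simp
  | cons b t ih => cases b <;> simp [List.count_cons] <;> omega

lemma subst_prefixN_succ (x : ℕ → Bool) (k : ℕ) :
    substApply θNP (prefixN x (k+1)) = substApply θNP (prefixN x k) ++ θNP (x k) := by
  rw [prefixN_succ]
  simp only [substApply]
  rw [List.flatMap_append]
  simp

lemma exists_k {a : Bool} {x : ℕ → Bool} (hx : IsFixPt θNP a x) (n : ℕ) :
    ∃ k, (substApply θNP (prefixN x k)).length ≤ n ∧
      n < (substApply θNP (prefixN x (k+1))).length := by
  induction n with
  | zero =>
      refine ⟨0, ?_, ?_⟩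
      · simp [prefixN, substApply]
      · rw [subst_prefixN_succ]
        have : 4 ≤ (θNP (x 0)).length := by cases (x 0) <;> simp [θNP]
        simp [List.length_append]
        omega
  | succ n ih =>
      obtain ⟨k, h1, h2⟩ := ih
      rcases Nat.lt_or_ge (n+1) ((substApply θNP (prefixN x (k+1))).length) with h | h
      · exact ⟨k, by omega, h⟩
      · refine ⟨k+1, h, ?_⟩
        have heq : n + 1 = (substApply θNP (prefixN x (k+1))).length := by omega
        rw [heq, subst_prefixN_succ x (k+1)]
        have : 4 ≤ (θNP (x (k+1))).length := by cases (x (k+1)) <;> simp [θNP]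
        simp [List.length_append]
        omega

lemma decomp {a : Bool} {x : ℕ → Bool} (hx : IsFixPt θNP a x) (n : ℕ) :
    ∃ k r, ∃ (hr : r < (θNP (x k)).length),
      n + (prefixN x k).count true = 5*k + r ∧
      (prefixN x n).count true
        = k + 2 * (prefixN x k).count true + ((θNP (x k)).take r).count true ∧
      x n = (θNP (x k)).getD r false ∧ (1 ≤ k → k < n) := by
  obtain ⟨k, h1, h2⟩ := exists_k hx n
  rw [subst_prefixN_succ, List.length_append] at h2
  set A := substApply θNP (prefixN x k) with hA
  have hAB : A ++ θNP (x k) = prefixN x ((A ++ θNP (x k)).length) := by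
    rw [← subst_prefixN_succ x k]
    exact subst_prefixN hx (k+1)
  have hL : A.length + (prefixN x k).count true = 5 * k := by
    have := len_subst (prefixN x k)
    rwa [prefixN_length] at this
  have hF : (prefixN x k).count true ≤ k := by
    have := List.count_le_length (l := prefixN x k) (a := true)
    rwa [prefixN_length] at this
  have hlenAB : (A ++ θNP (x k)).length = A.length + (θNP (x k)).length :=
    List.length_append ..
  refine ⟨k, n - A.length, by omega, by omega, ?_, ?_, by omega⟩
  · have hpn : prefixN x n = A ++ (θNP (x k)).take (n - A.length) := by
      have h3 : prefixN x n = (prefixN x ((A ++ θNP (x k)).length)).take n := by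
        rw [prefixN_take x (by omega)]
      rw [h3, ← hAB, show n = A.length + (n - A.length) from by omega]
      simp [List.take_append]
    rw [hpn, List.count_append]
    congr 1
    rw [hA, count_true_subst, prefixN_length]
  · have hxn : x n = (prefixN x ((A ++ θNP (x k)).length))[n]'(by
        rw [prefixN_length]; omega) := by
      rw [prefixN_getElem]
    rw [List.getD_eq_getElem _ _ (by omega), hxn]
    simp only [← hAB]
    rw [List.getElem_append_right (by omega)]


noncomputable def alp : ℝ := (3 - Real.sqrt 5)/2

lemma alp_facts : alp^2 = 3*alp - 1 ∧ 3/8 < alp ∧ alp < 1/2 := by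
  have hs := Real.sq_sqrt (by norm_num : (0:ℝ) ≤ 5)
  have hnn := Real.sqrt_nonneg 5
  have hs1 : 2 < Real.sqrt 5 := by nlinarith
  have hs2 : Real.sqrt 5 < 9/4 := by nlinarith
  refine ⟨by unfold alp; nlinarith, by unfold alp; linarith, by unfold alp; linarith⟩

set_option maxHeartbeats 2000000 in
lemma u_below {u : ℕ → Bool} (hu : IsFixPt θNP false u) :
    ∀ n, 1 ≤ n → 0 < alp * n - ((prefixN u n).count true : ℝ) ∧
      (u n = true → 1 < alp * n - ((prefixN u n).count true : ℝ)) := by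
  obtain ⟨hα, ha1, ha2⟩ := alp_facts
  intro n
  induction n using Nat.strong_induction_on with
  | _ n ih =>
    intro hn
    obtain ⟨k, r, hr, hlen, hcnt, hxn, hkn⟩ := decomp hu n
    set Fk := (prefixN u k).count true with hFk
    set Fn := (prefixN u n).count true with hFn
    set p := ((θNP (u k)).take r).count true with hp
    clear_value Fk Fn p
    have hlenR : (n:ℝ) + Fk = 5*k + r := by exact_mod_cast hlen
    have hcntR : (Fn:ℝ) = k + 2*Fk + p := by exact_mod_cast hcnt
    have hkey : alp*n - Fn = (alp+2)*(alp*k - Fk) + (alp*r - p) := by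
      linear_combination alp * hlenR - hcntR - (k:ℝ) * hα
    rcases Nat.eq_zero_or_pos k with hk0 | hk1
    · subst hk0
      have h0 : u 0 = false := fixpt_zero hu
      simp only [h0] at hr hxn hp
      have hF0 : Fk = 0 := by rw [hFk]; rfl
      have hr1 : 1 ≤ r := by
        rcases Nat.eq_zero_or_pos r with h | h
        · exfalso; omega
        · exact h
      simp [θNP] at hr
      interval_cases r
      · have hpv : p = 0 := by rw [hp]; rfl
        have hun : u n = false := by rw [hxn]; rfl
        refine ⟨?_, fun h => by rw [hun] at h; simp at h⟩
        rw [hkey, hpv, hF0]; push_cast; nlinarith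
      · have hpv : p = 0 := by rw [hp]; rfl
        have hun : u n = false := by rw [hxn]; rfl
        refine ⟨?_, fun h => by rw [hun] at h; simp at h⟩
        rw [hkey, hpv, hF0]; push_cast; nlinarith
      · have hpv : p = 0 := by rw [hp]; rfl
        have hun : u n = false := by rw [hxn]; rfl
        refine ⟨?_, fun h => by rw [hun] at h; simp at h⟩
        rw [hkey, hpv, hF0]; push_cast; nlinarith
      · have hpv : p = 0 := by rw [hp]; rfl
        refine ⟨?_, fun h => ?_⟩ <;> (rw [hkey, hpv, hF0]; push_cast; nlinarith)
    · have hIH := ih k (hkn hk1) hk1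
      cases hbk : u k with
      | false =>
          have hD : 0 < alp*k - Fk := by rw [hFk]; exact hIH.1
          have hprod : (alp+2)*0 < (alp+2)*(alp*k - Fk) :=
            mul_lt_mul_of_pos_left hD (by linarith)
          simp only [hbk] at hr hxn hp
          simp [θNP] at hr
          have hpv : p = 0 := by
            rw [hp]
            interval_cases r <;> rfl
          interval_cases r
          · have hun : u n = false := by rw [hxn]; rfl
            refine ⟨?_, fun h => by rw [hun] at h; simp at h⟩
            rw [hkey, hpv]; push_cast; nlinarith
          · have hun : u n = false := by rw [hxn]; rfl
            refine ⟨?_, fun h => by rw [hun] at h; simp at h⟩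
            rw [hkey, hpv]; push_cast; nlinarith
          · have hun : u n = false := by rw [hxn]; rfl
            refine ⟨?_, fun h => by rw [hun] at h; simp at h⟩
            rw [hkey, hpv]; push_cast; nlinarith
          · have hun : u n = false := by rw [hxn]; rfl
            refine ⟨?_, fun h => by rw [hun] at h; simp at h⟩
            rw [hkey, hpv]; push_cast; nlinarith
          · refine ⟨?_, fun h => ?_⟩ <;> (rw [hkey, hpv]; push_cast; nlinarith)
      | true =>
          have hD : 1 < alp*k - Fk := by rw [hFk]; exact hIH.2 hbk
          have hprod : (alp+2)*1 < (alp+2)*(alp*k - Fk) :=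
            mul_lt_mul_of_pos_left hD (by linarith)
          simp only [hbk] at hr hxn hp
          simp [θNP] at hr
          interval_cases r
          · have hpv : p = 0 := by rw [hp]; rfl
            refine ⟨?_, fun h => ?_⟩ <;> (rw [hkey, hpv]; push_cast; nlinarith)
          · have hpv : p = 1 := by rw [hp]; rfl
            refine ⟨?_, fun h => ?_⟩ <;> (rw [hkey, hpv]; push_cast; nlinarith)
          · have hpv : p = 2 := by rw [hp]; rfl
            refine ⟨?_, fun h => ?_⟩ <;> (rw [hkey, hpv]; push_cast; nlinarith)
          · have hpv : p = 3 := by rw [hp]; rfl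
            have hun : u n = false := by rw [hxn]; rfl
            refine ⟨?_, fun h => by rw [hun] at h; simp at h⟩
            rw [hkey, hpv]; push_cast; nlinarith


set_option maxHeartbeats 2000000 in
lemma v_above {v : ℕ → Bool} (hv : IsFixPt θNP true v) :
    ∀ n, 1 ≤ n → 0 < ((prefixN v n).count true : ℝ) - alp * n ∧
      (v n = false → 1 < ((prefixN v n).count true : ℝ) - alp * n) := by
  obtain ⟨hα, ha1, ha2⟩ := alp_facts
  intro n
  induction n using Nat.strong_induction_on with
  | _ n ih =>
    intro hn
    obtain ⟨k, r, hr, hlen, hcnt, hxn, hkn⟩ := decomp hv n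
    set Fk := (prefixN v k).count true with hFk
    set Fn := (prefixN v n).count true with hFn
    set p := ((θNP (v k)).take r).count true with hp
    clear_value Fk Fn p
    have hlenR : (n:ℝ) + Fk = 5*k + r := by exact_mod_cast hlen
    have hcntR : (Fn:ℝ) = k + 2*Fk + p := by exact_mod_cast hcnt
    have hkey : (Fn:ℝ) - alp*n = (alp+2)*((Fk:ℝ) - alp*k) + ((p:ℝ) - alp*r) := by
      linear_combination hcntR - alp * hlenR + (k:ℝ) * hα
    rcases Nat.eq_zero_or_pos k with hk0 | hk1
    · subst hk0
      have h0 : v 0 = true := fixpt_zero hv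
      simp only [h0] at hr hxn hp
      have hF0 : Fk = 0 := by rw [hFk]; rfl
      have hr1 : 1 ≤ r := by
        rcases Nat.eq_zero_or_pos r with h | h
        · exfalso; omega
        · exact h
      simp [θNP] at hr
      interval_cases r
      · have hpv : p = 1 := by rw [hp]; rfl
        have hun : v n = true := by rw [hxn]; rfl
        refine ⟨?_, fun h => by rw [hun] at h; simp at h⟩
        rw [hkey, hpv, hF0]; push_cast; nlinarith
      · have hpv : p = 2 := by rw [hp]; rfl
        have hun : v n = true := by rw [hxn]; rfl
        refine ⟨?_, fun h => by rw [hun] at h; simp at h⟩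
        rw [hkey, hpv, hF0]; push_cast; nlinarith
      · have hpv : p = 3 := by rw [hp]; rfl
        refine ⟨?_, fun h => ?_⟩ <;> (rw [hkey, hpv, hF0]; push_cast; nlinarith)
    · have hIH := ih k (hkn hk1) hk1
      cases hbk : v k with
      | true =>
          have hD : 0 < (Fk:ℝ) - alp*k := by rw [hFk]; exact hIH.1
          have hprod : (alp+2)*0 < (alp+2)*((Fk:ℝ) - alp*k) :=
            mul_lt_mul_of_pos_left hD (by linarith)
          simp only [hbk] at hr hxn hp
          simp [θNP] at hr
          interval_cases r
          · have hpv : p = 0 := by rw [hp]; rfl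
            have hun : v n = true := by rw [hxn]; rfl
            refine ⟨?_, fun h => by rw [hun] at h; simp at h⟩
            rw [hkey, hpv]; push_cast; nlinarith
          · have hpv : p = 1 := by rw [hp]; rfl
            have hun : v n = true := by rw [hxn]; rfl
            refine ⟨?_, fun h => by rw [hun] at h; simp at h⟩
            rw [hkey, hpv]; push_cast; nlinarith
          · have hpv : p = 2 := by rw [hp]; rfl
            have hun : v n = true := by rw [hxn]; rfl
            refine ⟨?_, fun h => by rw [hun] at h; simp at h⟩
            rw [hkey, hpv]; push_cast; nlinarith
          · have hpv : p = 3 := by rw [hp]; rfl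
            refine ⟨?_, fun h => ?_⟩ <;> (rw [hkey, hpv]; push_cast; nlinarith)
      | false =>
          have hD : 1 < (Fk:ℝ) - alp*k := by rw [hFk]; exact hIH.2 hbk
          have hprod : (alp+2)*1 < (alp+2)*((Fk:ℝ) - alp*k) :=
            mul_lt_mul_of_pos_left hD (by linarith)
          simp only [hbk] at hr hxn hp
          simp [θNP] at hr
          have hpv : p = 0 := by
            rw [hp]
            interval_cases r <;> rfl
          interval_cases r
          · refine ⟨?_, fun h => ?_⟩ <;> (rw [hkey, hpv]; push_cast; nlinarith)
          · refine ⟨?_, fun h => ?_⟩ <;> (rw [hkey, hpv]; push_cast; nlinarith)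
          · refine ⟨?_, fun h => ?_⟩ <;> (rw [hkey, hpv]; push_cast; nlinarith)
          · refine ⟨?_, fun h => ?_⟩ <;> (rw [hkey, hpv]; push_cast; nlinarith)
          · have hun : v n = true := by rw [hxn]; rfl
            refine ⟨?_, fun h => by rw [hun] at h; simp at h⟩
            rw [hkey, hpv]; push_cast; nlinarith

end NB

/-- **Proposition 2 of the paper.** For `θ : 0 ↦ 00001, 1 ↦ 1110`,
there is no balanced pair of nonempty prefixes of the two fixed points
`u* = θ^∞(0)` and `v* = θ^∞(1)`: there are no nonempty prefixes `A` of `u*` and `B`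
of `v*` with `N₀(A) = N₀(B)` and `N₁(A) = N₁(B)`. -/


theorem no_balanced_prefixes
    (u v : ℕ → Bool) (hu : IsFixPt θNP false u) (hv : IsFixPt θNP true v) :
    ¬ ∃ m n : ℕ, 0 < m ∧ 0 < n ∧
        (prefixN u m).count false = (prefixN v n).count false ∧
        (prefixN u m).count true = (prefixN v n).count true := by
  rintro ⟨m, n, hm, hn, h0c, h1c⟩
  have hLu := NB.count_false_add_true (prefixN u m)
  have hLv := NB.count_false_add_true (prefixN v n)
  rw [NB.prefixN_length] at hLu
  rw [NB.prefixN_length] at hLv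
  have hmn : m = n := by omega
  subst hmn
  have h1 := (NB.u_below hu m hm).1
  have h2 := (NB.v_above hv m hm).1
  rw [← h1c] at h2
  linarith
end

section
/- Consider the substitution σ on the alphabet {1,2,3} defined by σ(1) = 123, σ(2) = 222, σ(3) = 333, and let x = σ^∞(1) be its fixed point starting with 1. Then the frequency of the letter 2 in x does not exist: the limit as n → ∞ of (1/n)·Card{1 ≤ k ≤ n : x_k = 2} does not exist. -/
open Filter

/-- The substitution `σ` on the alphabet `{1,2,3}` (encoded as `Fin 3 = {0,1,2}`):
`1 ↦ 123`, `2 ↦ 222`, `3 ↦ 333`. -/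
def σ₃ : Fin 3 → List (Fin 3) := fun a =>
  if a = 0 then [0, 1, 2] else [a, a, a]


noncomputable def W (k : ℕ) : List (Fin 3) := (substApply σ₃)^[k] [0]

lemma subst_rep (m : ℕ) (a : Fin 3) (ha : a ≠ 0) :
    substApply σ₃ (List.replicate m a) = List.replicate (3 * m) a := by
  induction m with
  | zero => simp [substApply]
  | succ n ih =>
      rw [List.replicate_succ, show 3 * (n+1) = 3 + 3*n by ring]
      simp only [substApply, List.flatMap_cons] at ih ⊢
      rw [ih, σ₃, if_neg ha, List.replicate_add]
      rfl

lemma W_succ (k : ℕ) :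
    W (k+1) = W k ++ List.replicate (3^k) 1 ++ List.replicate (3^k) 2 := by
  induction k with
  | zero => simp [W, substApply, σ₃]
  | succ n ih =>
      have h1 : W (n+2) = substApply σ₃ (W (n+1)) :=
        Function.iterate_succ_apply' (substApply σ₃) (n+1) [0]
      have h3 : substApply σ₃ (W n) = W (n+1) :=
        (Function.iterate_succ_apply' (substApply σ₃) n [0]).symm
      rw [h1]
      conv_lhs => rw [ih]
      rw [substApply, List.flatMap_append, List.flatMap_append]
      rw [← substApply, ← substApply, ← substApply]
      rw [subst_rep _ 1 (by decide), subst_rep _ 2 (by decide), h3,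
        show (3:ℕ)^(n+1) = 3 * 3^n by ring]

lemma W_len (k : ℕ) : (W k).length = 3^k := by
  induction k with
  | zero => rfl
  | succ n ih => rw [W_succ]; simp [ih]; ring

lemma x_mid (x : ℕ → Fin 3) (hx : IsFixPt σ₃ 0 x) (k i : ℕ)
    (h1 : 3^k ≤ i) (h2 : i < 2 * 3^k) : x i = 1 := by
  have hl : i < (W (k+1)).length := by
    rw [W_len]; have : (2:ℕ) * 3^k < 3^(k+1) := by rw [pow_succ]; omega
    omega
  have h0 : x i = (W (k+1))[i]'hl := hx (k+1) i (by simpa [W] using hl)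
  rw [h0, List.getElem_of_eq (W_succ k) hl,
    List.getElem_append_left (by simp [W_len]; omega),
    List.getElem_append_right (by simp [W_len]; omega)]
  simp [W_len]

lemma x_last (x : ℕ → Fin 3) (hx : IsFixPt σ₃ 0 x) (k i : ℕ)
    (h1 : 2 * 3^k ≤ i) (h2 : i < 3^(k+1)) : x i = 2 := by
  have hl : i < (W (k+1)).length := by rw [W_len]; omega
  have h0 : x i = (W (k+1))[i]'hl := hx (k+1) i (by simpa [W] using hl)
  rw [h0, List.getElem_of_eq (W_succ k) hl,
    List.getElem_append_right (by simp [W_len]; omega)]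
  simp [W_len]

noncomputable def cnt (x : ℕ → Fin 3) (n : ℕ) : ℕ :=
  ((Finset.range n).filter (fun k => x k = 1)).card

lemma cnt_split (x : ℕ → Fin 3) (a b : ℕ) (hab : a ≤ b) :
    cnt x b = cnt x a + ((Finset.Ico a b).filter (fun k => x k = 1)).card := by
  unfold cnt
  rw [Finset.range_eq_Ico,
    ← Finset.Ico_union_Ico_eq_Ico (Nat.zero_le a) hab, Finset.filter_union,
    Finset.card_union_of_disjoint]
  · rw [Finset.range_eq_Ico]
  exact Finset.disjoint_filter_filter (p := fun k => x k = 1) (q := fun k => x k = 1) (Finset.Ico_disjoint_Ico_consecutive 0 a b)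

lemma cnt_two (x : ℕ → Fin 3) (hx : IsFixPt σ₃ 0 x) (k : ℕ) :
    cnt x (2 * 3^k) = cnt x (3^k) + 3^k := by
  rw [cnt_split x (3^k) (2*3^k) (by omega)]
  congr 1
  rw [Finset.filter_true_of_mem, Nat.card_Ico]
  · omega
  · intro i hi
    rw [Finset.mem_Ico] at hi
    exact x_mid x hx k i hi.1 hi.2

lemma cnt_pow_succ (x : ℕ → Fin 3) (hx : IsFixPt σ₃ 0 x) (k : ℕ) :
    cnt x (3^(k+1)) = cnt x (3^k) + 3^k := by
  rw [cnt_split x (2*3^k) (3^(k+1)) (by rw [pow_succ]; omega)]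
  rw [cnt_two x hx k]
  rw [Finset.filter_false_of_mem, Finset.card_empty, Nat.add_zero]
  intro i hi
  rw [Finset.mem_Ico] at hi
  rw [x_last x hx k i hi.1 hi.2]
  decide

lemma cnt_pow (x : ℕ → Fin 3) (hx : IsFixPt σ₃ 0 x) (k : ℕ) :
    2 * cnt x (3^k) + 1 = 3^k := by
  induction k with
  | zero =>
      have h0 : x 0 = 0 := by simpa [substApply] using hx 0 0 (by simp [substApply])
      simp [cnt, Finset.range_one, Finset.filter_singleton, h0]
  | succ n ih => rw [cnt_pow_succ x hx n, pow_succ]; omega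

/-- For the substitution `1 ↦ 123, 2 ↦ 222, 3 ↦ 333` with fixed
point `x = σ^∞(1)`, the frequency of the letter `2` in `x` does not exist. -/
theorem frequency_does_not_exist
    (x : ℕ → Fin 3) (hx : IsFixPt σ₃ 0 x) :
    ¬ ∃ f : ℝ, Tendsto
        (fun n : ℕ => (((Finset.range n).filter (fun k => x k = 1)).card : ℝ) / n)
        atTop (nhds f) := by
  rintro ⟨f, hf⟩
  set F : ℕ → ℝ := fun n => (((Finset.range n).filter (fun k => x k = 1)).card : ℝ) / n
    with hF
  have hcnt : ∀ n, (((Finset.range n).filter (fun k => x k = 1)).card : ℝ) = (cnt x n : ℝ) := by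
    intro n; rfl
  have h3 : Tendsto (fun k : ℕ => 3^k) atTop atTop :=
    tendsto_pow_atTop_atTop_of_one_lt (by norm_num)
  have h23 : Tendsto (fun k : ℕ => 2 * 3^k) atTop atTop :=
    h3.const_mul_atTop' (by norm_num)
  have hgeo : Tendsto (fun k : ℕ => ((1:ℝ)/3)^k) atTop (nhds 0) := by
    apply tendsto_pow_atTop_nhds_zero_of_lt_one <;> norm_num
  -- value of cnt at 3^k as real
  have hc : ∀ k, (cnt x (3^k) : ℝ) = ((3:ℝ)^k - 1) / 2 := by
    intro k
    have := cnt_pow x hx k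
    have : (2 * cnt x (3^k) + 1 : ℝ) = ((3:ℕ)^k : ℝ) := by exact_mod_cast congrArg (Nat.cast : ℕ → ℝ) this
    push_cast at this
    linarith
  have hpos : ∀ k : ℕ, (0:ℝ) < (3:ℝ)^k := fun k => by positivity
  -- limit along 3^k
  have hsub1 : Tendsto (fun k : ℕ => F (3^k)) atTop (nhds f) := hf.comp h3
  have hval1 : ∀ k, F (3^k) = 1/2 - (1/2) * ((1:ℝ)/3)^k := by
    intro k
    rw [hF]
    simp only
    rw [hcnt, hc]
    push_cast
    rw [div_pow, one_pow]
    field_simp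
    try ring
  have hlim1 : Tendsto (fun k : ℕ => F (3^k)) atTop (nhds (1/2)) := by
    simp only [hval1]
    have : Tendsto (fun k : ℕ => (1:ℝ)/2 - (1/2) * ((1:ℝ)/3)^k) atTop
        (nhds (1/2 - (1/2) * 0)) := tendsto_const_nhds.sub (tendsto_const_nhds.mul hgeo)
    simpa using this
  have hf1 : f = 1/2 := tendsto_nhds_unique hsub1 hlim1
  -- limit along 2 * 3^k
  have hsub2 : Tendsto (fun k : ℕ => F (2 * 3^k)) atTop (nhds f) := hf.comp h23
  have hval2 : ∀ k, F (2 * 3^k) = 3/4 - (1/4) * ((1:ℝ)/3)^k := by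
    intro k
    rw [hF]
    simp only
    rw [hcnt]
    rw [cnt_two x hx k]
    push_cast [hc]
    rw [div_pow, one_pow]
    field_simp
    try ring
  have hlim2 : Tendsto (fun k : ℕ => F (2 * 3^k)) atTop (nhds (3/4)) := by
    simp only [hval2]
    have : Tendsto (fun k : ℕ => (3:ℝ)/4 - (1/4) * ((1:ℝ)/3)^k) atTop
        (nhds (3/4 - (1/4) * 0)) := tendsto_const_nhds.sub (tendsto_const_nhds.mul hgeo)
    simpa using this
  have hf2 : f = 3/4 := tendsto_nhds_unique hsub2 hlim2
  rw [hf1] at hf2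
  norm_num at hf2
end

section
/- Let θ be the substitution θ(0) = 011, θ(1) = 101, with fixed points u* = θ^∞(0) and v* = θ^∞(1), and let Δ* = ((u*_n, v*_n))_{n≥0} be the diagonal sequence over the alphabet {(0,0),(0,1),(1,0),(1,1)}. Then Δ* contains arbitrarily long blocks consisting only of the letters (0,0) and (1,1); consequently the letters (0,1) and (1,0) occur in Δ* but Δ* is not uniformly recurrent. -/
/-- The word `w` occurs in the sequence `x` at position `m`. -/
def OccursAt {α : Type*} (x : ℕ → α) (w : List α) (m : ℕ) : Prop :=
  ∀ i (h : i < w.length), x (m + i) = w[i]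

/-- A sequence is uniformly recurrent if every word occurring in it occurs
syndetically (with bounded gaps). -/
def UniformlyRecurrent {α : Type*} (x : ℕ → α) : Prop :=
  ∀ w : List α, (∃ m, OccursAt x w m) →
    ∃ B : ℕ, ∀ N : ℕ, ∃ m, N ≤ m ∧ m ≤ N + B ∧ OccursAt x w m

/-- The substitution `θ(0) = 011`, `θ(1) = 101`. -/
def θD : Bool → List Bool := fun b =>
  if b then [true, false, true] else [false, true, true]

lemma len3 (b : Bool) : (θD b).length = 3 := by cases b <;> rfl

lemma substApply_length (w : List Bool) : (substApply θD w).length = 3 * w.length := by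
  induction w with
  | nil => rfl
  | cons b t ih =>
    simp only [substApply, List.flatMap_cons, List.length_append, List.length_cons]
    simp only [substApply] at ih
    rw [ih, len3]; ring

lemma iter_length (k : ℕ) (a : Bool) :
    ((substApply θD)^[k] [a]).length = 3 ^ k := by
  induction k with
  | zero => rfl
  | succ k ih => rw [Function.iterate_succ_apply', substApply_length, ih, pow_succ, mul_comm]

lemma substApply_getD (w : List Bool) (i j : ℕ) (hi : i < w.length) (hj : j < 3) :
    (substApply θD w).getD (3*i+j) true = (θD (w.getD i true)).getD j true := by
  induction w generalizing i with
  | nil => simp at hi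
  | cons b t ih =>
    cases i with
    | zero =>
      cases b <;> interval_cases j <;>
        simp [substApply, List.flatMap_cons, θD]
    | succ i =>
      have e : 3*(i+1)+j = (3*i+j)+1+1+1 := by ring
      rw [e]
      have hb : substApply θD (b :: t) = θD b ++ substApply θD t := by
        simp [substApply, List.flatMap_cons]
      rw [hb]
      cases b <;> simp only [θD, if_true, if_false, List.cons_append, List.nil_append,
        List.getD_cons_succ] <;>
        exact ih i (by simpa using hi)

lemma fixGen (a : Bool) (x : ℕ → Bool) (hx : IsFixPt θD a x) (n j : ℕ) (hj : j < 3) :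
    x (3*n+j) = (θD (x n)).getD j true := by
  have hk : n < 3 ^ n := Nat.lt_pow_self (n := n) (by norm_num)
  have hn : n < ((substApply θD)^[n] [a]).length := by rw [iter_length]; exact hk
  have hn3 : 3*n+j < ((substApply θD)^[n+1] [a]).length := by
    rw [iter_length, pow_succ]
    have := hk; omega
  have h1 := hx n n hn
  have h2 := hx (n+1) (3*n+j) hn3
  rw [h2]
  have hrw : (substApply θD)^[n+1] [a] = substApply θD ((substApply θD)^[n] [a]) :=
    Function.iterate_succ_apply' _ _ _
  have hg : ((substApply θD)^[n+1] [a])[3*n+j]'hn3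
      = ((substApply θD)^[n+1] [a]).getD (3*n+j) true :=
    (List.getD_eq_getElem _ _ hn3).symm
  rw [hg, hrw]
  rw [substApply_getD _ n j hn hj]
  congr 1
  rw [h1, List.getD_eq_getElem _ _ hn]

lemma fix0 (a : Bool) (x : ℕ → Bool) (hx : IsFixPt θD a x) (n : ℕ) : x (3*n) = x n := by
  have := fixGen a x hx n 0 (by norm_num)
  simpa using this |>.trans (by cases x n <;> rfl)

lemma fix1 (a : Bool) (x : ℕ → Bool) (hx : IsFixPt θD a x) (n : ℕ) : x (3*n+1) = !(x n) := by
  have := fixGen a x hx n 1 (by norm_num)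
  exact this.trans (by cases x n <;> rfl)

lemma fix2 (a : Bool) (x : ℕ → Bool) (hx : IsFixPt θD a x) (n : ℕ) : x (3*n+2) = true := by
  have := fixGen a x hx n 2 (by norm_num)
  exact this.trans (by cases x n <;> rfl)

lemma coin (u v : ℕ → Bool) (hu : IsFixPt θD false u) (hv : IsFixPt θD true v) :
    ∀ k, ∀ i < 3^k, u (2*3^k + i) = v (2*3^k + i) := by
  intro k
  induction k with
  | zero =>
    intro i hi
    interval_cases i
    show u (3*0+2) = v (3*0+2)
    rw [fix2 _ u hu, fix2 _ v hv]
  | succ k ih =>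
    intro i hi
    have h3 : (3:ℕ)^(k+1) = 3*3^k := by rw [pow_succ]; ring
    set q := i / 3 with hq
    set r := i % 3 with hr
    have hqr : i = 3*q + r := (Nat.div_add_mod i 3).symm |>.trans (by rfl)
    have hrlt : r < 3 := Nat.mod_lt _ (by norm_num)
    have hqlt : q < 3^k := by
      have := hi; rw [h3] at this; omega
    have e : 2*3^(k+1) + i = 3*(2*3^k + q) + r := by rw [h3]; omega
    rw [e]
    have huq := ih q hqlt
    interval_cases r
    · rw [Nat.add_zero, fix0 _ u hu, fix0 _ v hv, huq]
    · rw [fix1 _ u hu, fix1 _ v hv, huq]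
    · rw [fix2 _ u hu, fix2 _ v hv]


/-- For `θ(0) = 011, θ(1) = 101` with fixed points `u* = θ^∞(0)`,
`v* = θ^∞(1)`, the diagonal `Δ* = ((u*_n, v*_n))ₙ` contains arbitrarily long blocks
consisting only of the letters `(0,0)` and `(1,1)` (i.e. blocks of coincidences);
the letters `(0,1)` and `(1,0)` both occur in `Δ*`; and `Δ*` is not uniformly
recurrent. -/
theorem diagonal_not_uniformly_recurrent
    (u v : ℕ → Bool) (hu : IsFixPt θD false u) (hv : IsFixPt θD true v) :
    (∀ L : ℕ, ∃ m : ℕ, ∀ i < L, u (m + i) = v (m + i)) ∧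
    (∃ n, (u n, v n) = (false, true)) ∧
    (∃ n, (u n, v n) = (true, false)) ∧
    ¬ UniformlyRecurrent (fun n => (u n, v n)) := by
  have hu0 : u 0 = false := by
    have := hu 0 0 (by simp)
    simpa using this
  have hv0 : v 0 = true := by
    have := hv 0 0 (by simp)
    simpa using this
  have hu1 : u 1 = true := by
    have := fix1 _ u hu 0; simp [hu0] at this; simpa using this
  have hv1 : v 1 = false := by
    have := fix1 _ v hv 0; simp [hv0] at this; simpa using this
  refine ⟨?_, ⟨0, by rw [hu0, hv0]⟩, ⟨1, by rw [hu1, hv1]⟩, ?_⟩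
  · intro L
    refine ⟨2*3^L, fun i hi => ?_⟩
    exact coin u v hu hv L i (lt_of_lt_of_le hi (le_of_lt (Nat.lt_pow_self (n := L) (by norm_num))))
  · intro hUR
    obtain ⟨B, hB⟩ := hUR [(false, true)] ⟨0, fun i hi => by
      have : i = 0 := by simp at hi; omega
      subst this; simp [hu0, hv0]⟩
    obtain ⟨m, hm1, hm2, hm3⟩ := hB (2*3^(B+1))
    have hx : (u m, v m) = (false, true) := by
      have := hm3 0 (by simp)
      simpa using this
    have hBlt : B < 3^(B+1) := lt_of_lt_of_le (Nat.lt_pow_self (n := B) (by norm_num))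
      (Nat.pow_le_pow_right (by norm_num) (Nat.le_succ B))
    have : u m = v m := by
      have e : m = 2*3^(B+1) + (m - 2*3^(B+1)) := by omega
      rw [e]
      exact coin u v hu hv (B+1) _ (by omega)
    rw [Prod.mk.injEq] at hx
    rw [hx.1, hx.2] at this
    exact Bool.false_ne_true this
end

section
/- Let θ be the 'Kakutani' substitution θ(0) = 001, θ(1) = 11001, with fixed points u* = θ^∞(0), v* = θ^∞(1). Then the coincidence density δ_c = lim_{n→∞} (1/n)·Card{1 ≤ k ≤ n : u*_k = v*_k} exists and equals 1/2. -/
open Filter Finset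

/-- The Kakutani substitution `θ(0) = 001`, `θ(1) = 11001`. -/
def θK : Bool → List Bool := fun b =>
  if b then [true, true, false, false, true] else [false, false, true]

namespace Kak

abbrev A (k : ℕ) : List Bool := (substApply θK)^[k] [false]
abbrev Bw (k : ℕ) : List Bool := (substApply θK)^[k] [true]

lemma length_subst_ge (w : List Bool) : 3 * w.length ≤ (substApply θK w).length := by
  induction w with
  | nil => simp [substApply]
  | cons a t ih =>
      have h3 : 3 ≤ (θK a).length := by cases a <;> simp [θK]
      simp only [substApply, List.flatMap_cons, List.length_append, List.length_cons] at *
      omega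

lemma length_A (k : ℕ) : k + 1 ≤ (A k).length := by
  induction k with
  | zero => simp [A]
  | succ k ih =>
      have h2 := length_subst_ge (A k)
      have : A (k+1) = substApply θK (A k) := Function.iterate_succ_apply' _ _ _
      rw [this]
      omega

lemma length_Bw (k : ℕ) : k + 1 ≤ (Bw k).length := by
  induction k with
  | zero => simp [Bw]
  | succ k ih =>
      have h2 := length_subst_ge (Bw k)
      have : Bw (k+1) = substApply θK (Bw k) := Function.iterate_succ_apply' _ _ _
      rw [this]
      omega

lemma flatMap_prefix (σ : Bool → List Bool) (w : List Bool) (m : ℕ) (hm : m < w.length) :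
    ((w.take m).flatMap σ ++ σ w[m]) <+: w.flatMap σ := by
  conv_rhs => rw [← List.take_append_drop m w, List.drop_eq_getElem_cons hm]
  rw [List.flatMap_append, List.flatMap_cons, ← List.append_assoc]
  exact List.prefix_append _ _

lemma flatMap_getElem (σ : Bool → List Bool) (w : List Bool) (m : ℕ) (hm : m < w.length)
    (j : ℕ) (hj : j < (σ w[m]).length)
    (hb : ((w.take m).flatMap σ).length + j < (w.flatMap σ).length) :
    (w.flatMap σ)[((w.take m).flatMap σ).length + j] = (σ w[m])[j] := by
  have hpre := flatMap_prefix σ w m hm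
  have hlt : ((w.take m).flatMap σ).length + j < ((w.take m).flatMap σ ++ σ w[m]).length := by
    simp; omega
  rw [← List.IsPrefix.getElem hpre hlt]
  rw [List.getElem_append_right (by omega)]
  congr 1
  omega


section
variable (u : ℕ → Bool)

/-- block-boundary positions -/
def S (m : ℕ) : ℕ := ∑ i ∈ Finset.range m, (θK (u i)).length

variable {u} (hu : IsFixPt θK false u)
include hu

lemma take_flatMap_len (k m : ℕ) (hm : m ≤ (A k).length) :
    (((A k).take m).flatMap θK).length = S u m := by
  induction m with
  | zero => simp [S]
  | succ m ih =>
      have hm' : m < (A k).length := hm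
      have hval : u m = (A k)[m] := hu k m hm'
      rw [List.take_succ, List.getElem?_eq_getElem hm', List.flatMap_append, List.length_append,
        ih (le_of_lt hm')]
      simp only [S, Finset.sum_range_succ, hval]
      simp

lemma key (m j : ℕ) (hj : j < (θK (u m)).length) :
    u (S u m + j) = (θK (u m))[j] := by
  set k := m with hk
  have hm : m < (A k).length := length_A k
  have hAu : (A k)[m] = u m := (hu k m hm).symm
  have hpre := flatMap_prefix θK (A k) m hm
  have hlenpre : (((A k).take m).flatMap θK).length = S u m := take_flatMap_len hu k m (le_of_lt hm)
  have hb : S u m + j < ((A k).flatMap θK).length := by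
    have := hpre.length_le
    simp only [List.length_append, hlenpre] at this
    rw [hAu] at this
    omega
  have hA1 : A (k+1) = (A k).flatMap θK := by
    show (substApply θK)^[k+1] [false] = _
    rw [Function.iterate_succ_apply']; rfl
  have hb' : S u m + j < (A (k+1)).length := by rw [hA1]; exact hb
  have h1 := hu (k+1) (S u m + j) hb'
  have hj' : j < (θK ((A k)[m])).length := by rw [hAu]; exact hj
  have h2 := flatMap_getElem θK (A k) m hm j hj' (by rw [hlenpre]; exact hb)
  simp only [hlenpre] at h2
  have h4 : ((substApply θK)^[k+1] [false])[S u m + j]'hb' = ((A k).flatMap θK)[S u m + j]'hb :=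
    List.getElem_of_eq hA1 _
  rw [h1, h4, h2]
  simp only [hAu]

lemma u_zero : u 0 = false := by
  have := hu 0 0 (by simp [A])
  simpa using this

omit hu in
lemma S_succ (m : ℕ) : S u (m+1) = S u m + (θK (u m)).length := Finset.sum_range_succ _ _

lemma u_S_first (m : ℕ) : u (S u m) = u m := by
  have h := key hu m 0 (by cases hm : u m <;> simp [θK, hm])
  rw [Nat.add_zero] at h
  rw [h]
  cases hm : u m <;> simp [θK, hm]

end

def Bc (u : ℕ → Bool) (n : ℕ) : ℕ := ((Finset.range n).filter (fun k => u k = true)).card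
def Ec (u : ℕ → Bool) (n : ℕ) : ℕ := ((Finset.range n).filter (fun k => u k = u (k+1))).card

lemma Bc_succ (u : ℕ → Bool) (n : ℕ) :
    Bc u (n+1) = Bc u n + if u n = true then 1 else 0 := by
  unfold Bc
  rw [Finset.range_add_one, Finset.filter_insert]
  split
  · rw [Finset.card_insert_of_notMem (by simp)]
  · simp

lemma Ec_succ (u : ℕ → Bool) (n : ℕ) :
    Ec u (n+1) = Ec u n + if u n = u (n+1) then 1 else 0 := by
  unfold Ec
  rw [Finset.range_add_one, Finset.filter_insert]
  split
  · rw [Finset.card_insert_of_notMem (by simp)]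
  · simp

section
variable {u : ℕ → Bool} (hu : IsFixPt θK false u)
include hu

omit hu in
lemma S_eq (m : ℕ) : S u m = 3*m + 2*Bc u m := by
  induction m with
  | zero => simp [S, Bc]
  | succ m ih =>
      rw [S_succ, ih, Bc_succ]
      cases hm : u m <;> simp [θK, hm] <;> omega

lemma Bc_S (m : ℕ) : Bc u (S u m) = m + 2 * Bc u m := by
  induction m with
  | zero => simp [S, Bc]
  | succ m ih =>
      cases hm : u m
      · have e0 : u (S u m) = false := by
          simpa [θK, hm] using key hu m 0 (by simp [θK, hm])
        have e1 : u (S u m + 1) = false := by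
          simpa [θK, hm] using key hu m 1 (by simp [θK, hm])
        have e2 : u (S u m + 2) = true := by
          simpa [θK, hm] using key hu m 2 (by simp [θK, hm])
        have hS : S u (m+1) = S u m + 3 := by rw [S_succ]; simp [θK, hm]
        rw [hS, show S u m + 3 = (S u m + 2) + 1 from rfl, Bc_succ,
          show S u m + 2 = (S u m + 1) + 1 from rfl, Bc_succ, Bc_succ,
          Bc_succ u m]
        simp [e0, e1, e2, ih, hm]
        omega
      · have e0 : u (S u m) = true := by
          simpa [θK, hm] using key hu m 0 (by simp [θK, hm])
        have e1 : u (S u m + 1) = true := by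
          simpa [θK, hm] using key hu m 1 (by simp [θK, hm])
        have e2 : u (S u m + 2) = false := by
          simpa [θK, hm] using key hu m 2 (by simp [θK, hm])
        have e3 : u (S u m + 3) = false := by
          simpa [θK, hm] using key hu m 3 (by simp [θK, hm])
        have e4 : u (S u m + 4) = true := by
          simpa [θK, hm] using key hu m 4 (by simp [θK, hm])
        have hS : S u (m+1) = S u m + 5 := by rw [S_succ]; simp [θK, hm]
        rw [hS, show S u m + 5 = (S u m + 4) + 1 from rfl, Bc_succ,
          show S u m + 4 = (S u m + 3) + 1 from rfl, Bc_succ,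
          show S u m + 3 = (S u m + 2) + 1 from rfl, Bc_succ,
          show S u m + 2 = (S u m + 1) + 1 from rfl, Bc_succ, Bc_succ,
          Bc_succ u m]
        simp [e0, e1, e2, e3, e4, ih, hm]
        omega

lemma Ec_S (m : ℕ) : Ec u (S u m) = m + Bc u m + Bc u (m+1) := by
  induction m with
  | zero => simp [S, Ec, Bc, Finset.range_one, Finset.filter_singleton, u_zero hu]
  | succ m ih =>
      cases hm : u m
      · have e0 : u (S u m) = false := by
          simpa [θK, hm] using key hu m 0 (by simp [θK, hm])
        have e1 : u (S u m + 1) = false := by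
          simpa [θK, hm] using key hu m 1 (by simp [θK, hm])
        have e2 : u (S u m + 2) = true := by
          simpa [θK, hm] using key hu m 2 (by simp [θK, hm])
        have hS : S u (m+1) = S u m + 3 := by rw [S_succ]; simp [θK, hm]
        have e3 : u (S u m + 3) = u (m+1) := by
          have h := u_S_first hu (m+1)
          rwa [hS] at h
        rw [hS, show S u m + 3 = (S u m + 2) + 1 from rfl, Ec_succ,
          show S u m + 2 = (S u m + 1) + 1 from rfl, Ec_succ, Ec_succ, ih]
        rw [Bc_succ u (m+1), Bc_succ u m]
        simp only [show S u m + 1 + 1 = S u m + 2 from rfl,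
          show S u m + 2 + 1 = S u m + 3 from rfl]
        rw [e0, e1, e2, e3]
        cases h1 : u (m+1) <;> simp [hm] <;> omega
      · have e0 : u (S u m) = true := by
          simpa [θK, hm] using key hu m 0 (by simp [θK, hm])
        have e1 : u (S u m + 1) = true := by
          simpa [θK, hm] using key hu m 1 (by simp [θK, hm])
        have e2 : u (S u m + 2) = false := by
          simpa [θK, hm] using key hu m 2 (by simp [θK, hm])
        have e3 : u (S u m + 3) = false := by
          simpa [θK, hm] using key hu m 3 (by simp [θK, hm])
        have e4 : u (S u m + 4) = true := by
          simpa [θK, hm] using key hu m 4 (by simp [θK, hm])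
        have hS : S u (m+1) = S u m + 5 := by rw [S_succ]; simp [θK, hm]
        have e5 : u (S u m + 5) = u (m+1) := by
          have h := u_S_first hu (m+1)
          rwa [hS] at h
        rw [hS, show S u m + 5 = (S u m + 4) + 1 from rfl, Ec_succ,
          show S u m + 4 = (S u m + 3) + 1 from rfl, Ec_succ,
          show S u m + 3 = (S u m + 2) + 1 from rfl, Ec_succ,
          show S u m + 2 = (S u m + 1) + 1 from rfl, Ec_succ, Ec_succ, ih]
        rw [Bc_succ u (m+1), Bc_succ u m]
        simp only [show S u m + 1 + 1 = S u m + 2 from rfl,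
          show S u m + 2 + 1 = S u m + 3 from rfl,
          show S u m + 3 + 1 = S u m + 4 from rfl,
          show S u m + 4 + 1 = S u m + 5 from rfl]
        rw [e0, e1, e2, e3, e4, e5]
        cases h1 : u (m+1) <;> simp [hm] <;> omega

omit hu in
lemma abs_step (x c : ℤ) (hc : |c| ≤ 1) : |x + c| ≤ |x| + 1 :=
  (abs_add_le x c).trans (by linarith)

omit hu in
lemma Bc_abs_add (a b : ℕ) :
    |2*(Bc u (a+b) : ℤ) - (a+b)| ≤ |2*(Bc u a : ℤ) - a| + b := by
  induction b with
  | zero => simp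
  | succ b ih =>
      rw [show a + (b+1) = (a+b)+1 from rfl, Bc_succ u (a+b)]
      have h1 : (2*((Bc u (a+b) + if u (a+b) = true then 1 else 0 : ℕ)) : ℤ) - ((a+b:ℕ)+1)
          = (2*(Bc u (a+b):ℤ) - (a+b)) + (2*(if u (a+b) = true then 1 else 0) - 1) := by
        by_cases hc : u (a+b) = true <;> simp [hc] <;> push_cast <;> ring
      have h2 : |(2*(if u (a+b) = true then 1 else 0 : ℤ) - 1)| ≤ 1 := by
        by_cases hc : u (a+b) = true <;> simp [hc]
      calc |(2*((Bc u (a+b) + if u (a+b) = true then 1 else 0 : ℕ)) : ℤ) - ((a+b:ℕ)+1)|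
          = |(2*(Bc u (a+b):ℤ) - (a+b)) + (2*(if u (a+b) = true then 1 else 0) - 1)| := by
            rw [h1]
        _ ≤ |2*(Bc u (a+b):ℤ) - (a+b)| + 1 := abs_step _ _ h2
        _ ≤ (|2*(Bc u a : ℤ) - a| + b) + 1 := by linarith
        _ = |2*(Bc u a : ℤ) - a| + (b+1 : ℕ) := by push_cast; ring

omit hu in
lemma Ec_abs_add (a b : ℕ) :
    |2*(Ec u (a+b) : ℤ) - (a+b)| ≤ |2*(Ec u a : ℤ) - a| + b := by
  induction b with
  | zero => simp
  | succ b ih =>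
      rw [show a + (b+1) = (a+b)+1 from rfl, Ec_succ u (a+b)]
      have h1 : (2*((Ec u (a+b) + if u (a+b) = u (a+b+1) then 1 else 0 : ℕ)) : ℤ) - ((a+b:ℕ)+1)
          = (2*(Ec u (a+b):ℤ) - (a+b)) + (2*(if u (a+b) = u (a+b+1) then 1 else 0) - 1) := by
        by_cases hc : u (a+b) = u (a+b+1) <;> simp [hc] <;> push_cast <;> ring
      have h2 : |(2*(if u (a+b) = u (a+b+1) then 1 else 0 : ℤ) - 1)| ≤ 1 := by
        by_cases hc : u (a+b) = u (a+b+1) <;> simp [hc]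
      calc |(2*((Ec u (a+b) + if u (a+b) = u (a+b+1) then 1 else 0 : ℕ)) : ℤ) - ((a+b:ℕ)+1)|
          = |(2*(Ec u (a+b):ℤ) - (a+b)) + (2*(if u (a+b) = u (a+b+1) then 1 else 0) - 1)| := by
            rw [h1]
        _ ≤ |2*(Ec u (a+b):ℤ) - (a+b)| + 1 := abs_step _ _ h2
        _ ≤ (|2*(Ec u a : ℤ) - a| + b) + 1 := by linarith
        _ = |2*(Ec u a : ℤ) - a| + (b+1 : ℕ) := by push_cast; ring

omit hu in
lemma exists_block (n : ℕ) : ∃ m, S u m ≤ n ∧ n < S u (m+1) ∧ 3*m ≤ n := by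
  classical
  have hex : ∃ m, n < S u (m+1) := ⟨n, by have := S_eq (u := u) (n+1); omega⟩
  refine ⟨Nat.find hex, ?_, Nat.find_spec hex, ?_⟩
  · rcases hm : Nat.find hex with _ | m'
    · simp [S]
    · have := Nat.find_min hex (by omega : m' < Nat.find hex)
      omega
  · have h1 := S_eq (u := u) (Nat.find hex)
    rcases hm : Nat.find hex with _ | m'
    · omega
    · have := Nat.find_min hex (by omega : m' < Nat.find hex)
      have h2 := S_eq (u := u) (m'+1)
      omega

lemma DB_bound : ∀ n, |2*(Bc u n : ℤ) - n| ≤ 4 * (Nat.log 3 n : ℤ) + 4 := by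
  intro n
  induction n using Nat.strong_induction_on with
  | _ n ih =>
    obtain ⟨m, hm1, hm2, hm3⟩ := exists_block (u := u) n
    have hlen : S u (m+1) ≤ S u m + 5 := by
      rw [S_succ]; cases hm : u m <;> simp [θK, hm]
    have hr : n - S u m ≤ 4 := by omega
    have hsplit : n = S u m + (n - S u m) := by omega
    have habs : |2*(Bc u n : ℤ) - n| ≤ |2*(Bc u (S u m) : ℤ) - (S u m)| + (n - S u m : ℕ) := by
      conv_lhs => rw [hsplit]
      exact Bc_abs_add (u := u) (S u m) (n - S u m)
    have heq : 2*(Bc u (S u m) : ℤ) - (S u m) = 2*(Bc u m : ℤ) - m := by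
      have h1 := Bc_S hu m
      have h2 := S_eq (u := u) m
      rw [h1, h2]; push_cast; ring
    rw [heq] at habs
    rcases Nat.eq_zero_or_pos m with hm0 | hmpos
    · have hz : |2*(Bc u m : ℤ) - m| = 0 := by rw [hm0]; simp [Bc]
      rw [hz] at habs
      have hlogpos : (0:ℤ) ≤ 4 * (Nat.log 3 n : ℤ) := by positivity
      have hrz : ((n - S u m : ℕ) : ℤ) ≤ 4 := by exact_mod_cast hr
      linarith
    · have hmn : m < n := by omega
      have hIH := ih m hmn
      have hlog : (Nat.log 3 m : ℤ) + 1 ≤ (Nat.log 3 n : ℤ) := by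
        have h1 : Nat.log 3 (m*3) = Nat.log 3 m + 1 :=
          Nat.log_mul_base (by norm_num) (by omega)
        have h2 : Nat.log 3 (m*3) ≤ Nat.log 3 n := Nat.log_mono_right (by omega)
        exact_mod_cast by omega
      have hrz : ((n - S u m : ℕ) : ℤ) ≤ 4 := by exact_mod_cast hr
      linarith

lemma DE_bound (n : ℕ) : |2*(Ec u n : ℤ) - n| ≤ 4 * (Nat.log 3 n : ℤ) + 9 := by
  obtain ⟨m, hm1, hm2, hm3⟩ := exists_block (u := u) n
  have hlen : S u (m+1) ≤ S u m + 5 := by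
    rw [S_succ]; cases hm : u m <;> simp [θK, hm]
  have hr : n - S u m ≤ 4 := by omega
  have hsplit : n = S u m + (n - S u m) := by omega
  have habs : |2*(Ec u n : ℤ) - n| ≤ |2*(Ec u (S u m) : ℤ) - (S u m)| + (n - S u m : ℕ) := by
    conv_lhs => rw [hsplit]
    exact Ec_abs_add (u := u) (S u m) (n - S u m)
  have heq : 2*(Ec u (S u m) : ℤ) - (S u m) = 2*(Bc u (m+1) : ℤ) - m := by
    have h1 := Ec_S hu m
    have h2 := S_eq (u := u) m
    rw [h1, h2]; push_cast; ring
  rw [heq] at habs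
  have htri : |2*(Bc u (m+1) : ℤ) - m| ≤ |2*(Bc u (m+1) : ℤ) - (m+1)| + 1 := by
    have := abs_add_le (2*(Bc u (m+1) : ℤ) - (m+1)) 1
    simpa [sub_add_eq_add_sub] using by
      calc |2*(Bc u (m+1) : ℤ) - m| = |(2*(Bc u (m+1) : ℤ) - (m+1)) + 1| := by ring_nf
        _ ≤ |2*(Bc u (m+1) : ℤ) - (m+1)| + 1 := abs_step _ _ (by norm_num)
  have hDB := DB_bound hu (m+1)
  push_cast at hDB
  have hlog : (Nat.log 3 (m+1) : ℤ) ≤ (Nat.log 3 n : ℤ) := by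
    rcases Nat.eq_zero_or_pos m with hm0 | hmpos
    · subst hm0; simp
    · exact_mod_cast Nat.log_mono_right (by omega : m + 1 ≤ n)
  have hrz : ((n - S u m : ℕ) : ℤ) ≤ 4 := by exact_mod_cast hr
  linarith

omit hu in
lemma AB_rel : ∀ k, 1 ≤ k → ∃ t R, A k = false :: false :: t ∧ Bw k = true :: (t ++ R) := by
  intro k hk
  induction k with
  | zero => omega
  | succ k ih =>
      rcases Nat.eq_zero_or_pos k with h0 | hpos
      · subst h0
        exact ⟨[true], [false, false, true], rfl, rfl⟩
      · obtain ⟨t, R, hA, hB⟩ := ih hpos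
        refine ⟨[true, false, false, true] ++ substApply θK t, substApply θK R, ?_, ?_⟩
        · show (substApply θK)^[k+1] [false] = _
          rw [Function.iterate_succ_apply']
          show substApply θK (A k) = _
          rw [hA]
          simp [substApply, θK]
        · show (substApply θK)^[k+1] [true] = _
          rw [Function.iterate_succ_apply']
          show substApply θK (Bw k) = _
          rw [hB]
          simp [substApply, θK]

lemma v_eq_shift {v : ℕ → Bool} (hv : IsFixPt θK true v) (i : ℕ) :
    v (i+1) = u (i+2) := by
  set k := i + 3 with hk
  obtain ⟨t, R, hA, hB⟩ := AB_rel k (by omega)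
  have hlA : k + 1 ≤ (A k).length := length_A k
  have htlen : i + 2 ≤ t.length := by
    have : (A k).length = t.length + 2 := by rw [hA]; simp
    omega
  have hit : i < t.length := by omega
  have hb1 : i + 1 < (Bw k).length := by rw [hB]; simp; omega
  have hb2 : i + 2 < (A k).length := by omega
  rw [hv k (i+1) hb1, hu k (i+2) hb2]
  have e1 : (Bw k)[i+1]'hb1 = t[i]'hit := by
    rw [List.getElem_of_eq hB hb1]
    show (t ++ R)[i]'_ = _
    exact List.getElem_append_left hit
  have e2 : (A k)[i+2]'hb2 = t[i]'hit := by
    rw [List.getElem_of_eq hA hb2]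
    rfl
  rw [e1, e2]

lemma u_one : u 1 = false := by
  have h : (1:ℕ) < (A 1).length := by
    show 1 < (substApply θK [false]).length
    simp [substApply, θK]
  have := hu 1 1 h
  rw [this]
  rfl

end
end Kak


/-- For the Kakutani substitution `θ(0) = 001, θ(1) = 11001` with
fixed points `u* = θ^∞(0)`, `v* = θ^∞(1)`, the coincidence density
`δ_c = lim (1/n)·#{k ≤ n : u*_k = v*_k}` exists and equals `1/2`. -/
theorem kakutani_coincidence_density
    (u v : ℕ → Bool) (hu : IsFixPt θK false u) (hv : IsFixPt θK true v) :
    Tendsto (fun n : ℕ =>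
        (((Finset.range n).filter (fun k => u k = v k)).card : ℝ) / n)
      atTop (nhds (1 / 2)) := by
  classical
  have hu0 : u 0 = false := Kak.u_zero hu
  have hu1 : u 1 = false := Kak.u_one hu
  have hv0 : v 0 = true := by
    have h : (0:ℕ) < (Kak.Bw 0).length := by simp [Kak.Bw]
    have := hv 0 0 h
    rw [this]; rfl
  have hshift : ∀ k, 1 ≤ k → v k = u (k+1) := by
    intro k hk
    obtain ⟨i, rfl⟩ : ∃ i, k = i + 1 := ⟨k - 1, by omega⟩
    exact Kak.v_eq_shift hu hv i
  set F : ℕ → ℕ := fun n => ((Finset.range n).filter (fun k => u k = v k)).card with hF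
  have hfilter : ∀ n, ((Finset.range n).filter (fun k => u k = v k)) =
      ((Finset.range n).filter (fun k => u k = u (k+1))).erase 0 := by
    intro n
    ext k
    simp only [Finset.mem_filter, Finset.mem_erase, Finset.mem_range]
    constructor
    · rintro ⟨hk, he⟩
      have hk0 : k ≠ 0 := by
        rintro rfl
        rw [hu0, hv0] at he
        exact Bool.noConfusion he
      refine ⟨hk0, hk, ?_⟩
      rw [← hshift k (by omega)]; exact he
    · rintro ⟨hk0, hk, he⟩
      exact ⟨hk, by rw [hshift k (by omega)]; exact he⟩
  have hcard : ∀ n, 1 ≤ n → (F n : ℤ) = (Kak.Ec u n : ℤ) - 1 := by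
    intro n hn
    have h0mem : 0 ∈ (Finset.range n).filter (fun k => u k = u (k+1)) := by
      simp only [Finset.mem_filter, Finset.mem_range]
      exact ⟨by omega, by rw [hu0, hu1]⟩
    have hpos : 1 ≤ ((Finset.range n).filter (fun k => u k = u (k+1))).card :=
      Finset.card_pos.mpr ⟨0, h0mem⟩
    have h1 : F n = ((Finset.range n).filter (fun k => u k = u (k+1))).card - 1 := by
      rw [hF]
      simp only [hfilter n, Finset.card_erase_of_mem h0mem]
    rw [h1]
    have h2 : Kak.Ec u n = ((Finset.range n).filter (fun k => u k = u (k+1))).card := rfl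
    rw [h2]
    push_cast [Nat.cast_sub hpos]
    ring
  have hFbound : ∀ n, 1 ≤ n → |2*(F n : ℤ) - n| ≤ 4*(Nat.log 3 n : ℤ) + 11 := by
    intro n hn
    have hDE := Kak.DE_bound hu n
    have h1 : 2*(F n : ℤ) - n = (2*(Kak.Ec u n : ℤ) - n) + (-2) := by
      rw [hcard n hn]; ring
    rw [h1]
    have := abs_add_le (2*(Kak.Ec u n : ℤ) - n) (-2)
    simp only [abs_neg, abs_two] at this
    linarith
  have hreal : ∀ n : ℕ, 1 ≤ n → |(F n : ℝ)/n - 1/2| ≤ 2*((Nat.log 3 n : ℝ)/n) + 6*(1/n) := by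
    intro n hn
    have hn0 : (0:ℝ) < n := by exact_mod_cast (by omega : 0 < n)
    have hZ := hFbound n hn
    have hR : |2*(F n : ℝ) - n| ≤ 4*(Nat.log 3 n : ℝ) + 11 := by
      have : ((|2*(F n : ℤ) - n| : ℤ) : ℝ) ≤ ((4*(Nat.log 3 n : ℤ) + 11 : ℤ) : ℝ) := by
        exact_mod_cast hZ
      rw [Int.cast_abs] at this
      push_cast at this
      exact this
    have heq : (F n : ℝ)/n - 1/2 = (2*(F n : ℝ) - n)/(2*n) := by
      field_simp
    rw [heq, abs_div, abs_of_pos (by positivity : (0:ℝ) < 2*n)]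
    rw [div_le_iff₀ (by positivity : (0:ℝ) < 2*n)]
    have hrhs : (2*((Nat.log 3 n : ℝ)/n) + 6*(1/n)) * (2*n) = 4*(Nat.log 3 n : ℝ) + 12 := by
      field_simp
      ring
    rw [hrhs]
    linarith
  have hlog1 : Tendsto (fun x : ℝ => Real.log x / x) atTop (nhds 0) :=
    Real.isLittleO_log_id_atTop.tendsto_div_nhds_zero
  have hlogn : Tendsto (fun n : ℕ => Real.log n / n) atTop (nhds 0) :=
    hlog1.comp tendsto_natCast_atTop_atTop
  have hNatlog : ∀ n : ℕ, 1 ≤ n → (Nat.log 3 n : ℝ)/n ≤ Real.log n / n := by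
    intro n hn
    have hp : (3:ℕ)^(Nat.log 3 n) ≤ n := Nat.pow_log_le_self 3 (by omega)
    have hpR : ((3:ℝ))^(Nat.log 3 n) ≤ (n:ℝ) := by exact_mod_cast hp
    have hlog3 : (1:ℝ) ≤ Real.log 3 := by
      rw [Real.le_log_iff_exp_le (by norm_num : (0:ℝ) < 3)]
      exact Real.exp_one_lt_d9.le.trans (by norm_num)
    have h2 : (Nat.log 3 n : ℝ) * Real.log 3 ≤ Real.log n := by
      rw [← Real.log_pow]
      exact Real.log_le_log (by positivity) hpR
    have h3 : (Nat.log 3 n : ℝ) ≤ Real.log n := by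
      nlinarith [Nat.cast_nonneg (α := ℝ) (Nat.log 3 n)]
    gcongr
  have h1 : Tendsto (fun n : ℕ => (Nat.log 3 n : ℝ)/n) atTop (nhds 0) := by
    apply squeeze_zero' ?_ ?_ hlogn
    · exact Filter.eventually_atTop.2 ⟨1, fun n hn => by positivity⟩
    · exact Filter.eventually_atTop.2 ⟨1, fun n hn => hNatlog n hn⟩
  have hg : Tendsto (fun n : ℕ => 2*((Nat.log 3 n : ℝ)/n) + 6*(1/n)) atTop (nhds 0) := by
    have := (h1.const_mul (2:ℝ)).add ((tendsto_one_div_atTop_nhds_zero_nat).const_mul (6:ℝ))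
    simpa using this
  have hdiff : Tendsto (fun n : ℕ => (F n : ℝ)/n - 1/2) atTop (nhds 0) := by
    apply squeeze_zero_norm' ?_ hg
    refine Filter.eventually_atTop.2 ⟨1, fun n hn => ?_⟩
    simpa [Real.norm_eq_abs] using hreal n hn
  have hfin := hdiff.add (tendsto_const_nhds (x := (1/2:ℝ)) (f := atTop))
  simp only [zero_add] at hfin
  convert hfin using 2 with n
  ring
end

section
/- Let θ: 0 ↦ 010, 1 ↦ 11010 with fixed points u* = θ^∞(0), v* = θ^∞(1). Then the coincidence density lim_{n→∞} (1/n)·Card{1 ≤ k ≤ n : u*_k = v*_k} does not exist. -/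
open Filter

/-- The substitution `θ : 0 ↦ 010, 1 ↦ 11010`. -/
def θS : Bool → List Bool := fun b =>
  if b then [true, true, false, true, false] else [false, true, false]

-- inner machinery
def fx (b : Bool) : List Bool := if b then [false,true,false,true,true] else [false,true,false]
def fy (b : Bool) : List Bool := if b then [true,true,false,true,false] else [false,true,false]
def hz (b : Bool) : List Bool := if b then [true,false,true,true,false] else [true,false,false]
def XF (z : List Bool) : List Bool := z.flatMap fx
def YF (z : List Bool) : List Bool := z.flatMap fy
def MF (z : List Bool) : List Bool := z.flatMap hz
def zz : ℕ → List Bool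
  | 0 => [false]
  | t+1 => (MF (zz t)).tail

lemma sa_append (σ : Bool → List Bool) (a b : List Bool) :
    substApply σ (a ++ b) = substApply σ a ++ substApply σ b := by
  simp [substApply]

lemma XF_append (a b : List Bool) : XF (a ++ b) = XF a ++ XF b := by simp [XF]
lemma YF_append (a b : List Bool) : YF (a ++ b) = YF a ++ YF b := by simp [YF]

lemma zz_cons : ∀ t, ∃ x w, zz t = x :: w := by
  intro t
  induction t with
  | zero => exact ⟨false, [], rfl⟩
  | succ t ih =>
    obtain ⟨x, w, hw⟩ := ih
    show ∃ x' w', (MF (zz t)).tail = x' :: w'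
    rw [hw]
    cases x <;> simp [MF, hz]

lemma MF_zz (t : ℕ) : MF (zz t) = true :: zz (t+1) := by
  obtain ⟨x, w, hw⟩ := zz_cons t
  show MF (zz t) = true :: (MF (zz t)).tail
  rw [hw]
  cases x <;> simp [MF, hz]

-- bridges
lemma BX : ∀ z, XF (MF z) = substApply θS (XF z) := by
  intro z
  induction z with
  | nil => rfl
  | cons x xs ih =>
    show XF (hz x ++ MF xs) = substApply θS (fx x ++ XF xs)
    rw [XF_append, sa_append, ih]
    congr 1
    cases x <;> rfl

def w8 : List Bool := [true,true,false,true,false,false,true,false]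

lemma BY : ∀ z, w8 ++ substApply θS (YF z) = YF (MF z) ++ w8 := by
  intro z
  induction z with
  | nil => rfl
  | cons x xs ih =>
    show w8 ++ substApply θS (fy x ++ YF xs) = YF (hz x ++ MF xs) ++ w8
    rw [sa_append, YF_append, ← List.append_assoc, List.append_assoc (YF (hz x))]
    rw [← ih]
    have : w8 ++ substApply θS (fy x) = YF (hz x) ++ w8 := by cases x <;> rfl
    rw [← List.append_assoc, this, List.append_assoc]

def eE : ℕ → List Bool
  | 0 => [false,true,false]
  | k+1 => substApply θS (eE k)

def Ub (t : ℕ) : List Bool := XF (zz t) ++ [true,true]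
def Vb (t : ℕ) : List Bool := [true,true] ++ YF (zz t)

lemma PU (t : ℕ) : substApply θS (Ub t) =
    Ub 0 ++ Ub (t+1) ++ Ub 0 ++ [false,true,false] := by
  show substApply θS (XF (zz t) ++ [true,true]) = _
  rw [sa_append, ← BX, MF_zz]
  show XF ([true] ++ zz (t+1)) ++ _ = _
  rw [XF_append]
  show XF [true] ++ XF (zz (t+1)) ++ [true,true,false,true,false,true,true,false,true,false] = _
  simp only [Ub, XF, zz, List.flatMap, fx, List.append_assoc]
  rfl

lemma PV (t : ℕ) : substApply θS (Vb t) =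
    Vb 0 ++ Vb (t+1) ++ Vb 0 ++ [false,true,false] := by
  have h := BY (zz t)
  rw [MF_zz] at h
  have h3 : YF (true :: zz (t+1)) = [true,true,false,true,false] ++ YF (zz (t+1)) := rfl
  rw [h3] at h
  have key : [false,true,false] ++ substApply θS (YF (zz t)) = YF (zz (t+1)) ++ w8 := by
    have h4 : w8 ++ substApply θS (YF (zz t)) =
        [true,true,false,true,false] ++ ([false,true,false] ++ substApply θS (YF (zz t))) := rfl
    rw [h4, List.append_assoc] at h
    exact List.append_cancel_left h
  show substApply θS ([true,true] ++ YF (zz t)) =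
      ([true,true] ++ YF (zz 0)) ++ ([true,true] ++ YF (zz (t+1))) ++
        ([true,true] ++ YF (zz 0)) ++ [false,true,false]
  rw [sa_append]
  show [true,true,false,true,false,true,true] ++ ([false,true,false] ++ substApply θS (YF (zz t))) = _
  rw [key]
  have l2 : YF (zz 0) = [false,true,false] := rfl
  rw [l2]
  simp only [w8, List.cons_append, List.nil_append, List.append_assoc]

def Fu : ℕ → ℕ → List Bool
  | 0, j => Ub j
  | (k+1), j => Fu k 0 ++ Fu k (j+1) ++ Fu k 0 ++ eE k
def Fv : ℕ → ℕ → List Bool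
  | 0, j => Vb j
  | (k+1), j => Fv k 0 ++ Fv k (j+1) ++ Fv k 0 ++ eE k

lemma PFu : ∀ k j, substApply θS (Fu k j) = Fu (k+1) j := by
  intro k
  induction k with
  | zero => intro j; exact PU j
  | succ k ih =>
    intro j
    show substApply θS (Fu k 0 ++ Fu k (j+1) ++ Fu k 0 ++ eE k) = _
    rw [sa_append, sa_append, sa_append, ih, ih]
    rfl

lemma PFv : ∀ k j, substApply θS (Fv k j) = Fv (k+1) j := by
  intro k
  induction k with
  | zero => intro j; exact PV j
  | succ k ih =>
    intro j
    show substApply θS (Fv k 0 ++ Fv k (j+1) ++ Fv k 0 ++ eE k) = _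
    rw [sa_append, sa_append, sa_append, ih, ih]
    rfl

-- prefix machinery
lemma prefix_sa {σ : Bool → List Bool} {a b : List Bool} (h : a <+: b) :
    substApply σ a <+: substApply σ b := by
  obtain ⟨t, rfl⟩ := h
  rw [sa_append]
  exact List.prefix_append _ _

def itU (k : ℕ) : List Bool := (substApply θS)^[k] [false]
def itV (k : ℕ) : List Bool := (substApply θS)^[k] [true]

lemma itU_succ (k : ℕ) : itU (k+1) = substApply θS (itU k) :=
  Function.iterate_succ_apply' _ _ _
lemma itV_succ (k : ℕ) : itV (k+1) = substApply θS (itV k) :=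
  Function.iterate_succ_apply' _ _ _

lemma FuP : ∀ k, Fu k 0 <+: itU (k+3) := by
  intro k
  induction k with
  | zero =>
    show Ub 0 <+: itU 3
    decide
  | succ k ih =>
    rw [show k+1+3 = (k+3)+1 by omega, itU_succ, ← PFu]
    exact prefix_sa ih

lemma FvP : ∀ k, Fv k 0 <+: itV (k+2) := by
  intro k
  induction k with
  | zero =>
    show Vb 0 <+: itV 2
    decide
  | succ k ih =>
    rw [show k+1+2 = (k+2)+1 by omega, itV_succ, ← PFv]
    exact prefix_sa ih

def Tu : ℕ → List Bool
  | 0 => []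
  | (k+1) => Fu k 0 ++ Tu k
def Tv : ℕ → List Bool
  | 0 => []
  | (k+1) => Fv k 0 ++ Tv k

lemma TUpre : ∀ k j, Tu k ++ Ub (k+j) <+: Fu k j := by
  intro k
  induction k with
  | zero =>
    intro j
    show [] ++ Ub (0+j) <+: Ub j
    simp
  | succ k ih =>
    intro j
    show Fu k 0 ++ Tu k ++ Ub (k+1+j) <+: Fu k 0 ++ Fu k (j+1) ++ Fu k 0 ++ eE k
    rw [show k+1+j = k+(j+1) by omega, List.append_assoc]
    refine List.IsPrefix.trans ?_ (by simp [List.append_assoc] : Fu k 0 ++ Fu k (j+1) <+: _)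
    obtain ⟨t, ht⟩ := ih (j+1)
    exact ⟨t, by rw [List.append_assoc, ht]⟩

lemma TVpre : ∀ k j, Tv k ++ Vb (k+j) <+: Fv k j := by
  intro k
  induction k with
  | zero =>
    intro j
    show [] ++ Vb (0+j) <+: Vb j
    simp
  | succ k ih =>
    intro j
    show Fv k 0 ++ Tv k ++ Vb (k+1+j) <+: Fv k 0 ++ Fv k (j+1) ++ Fv k 0 ++ eE k
    rw [show k+1+j = k+(j+1) by omega, List.append_assoc]
    refine List.IsPrefix.trans ?_ (by simp [List.append_assoc] : Fv k 0 ++ Fv k (j+1) <+: _)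
    obtain ⟨t, ht⟩ := ih (j+1)
    exact ⟨t, by rw [List.append_assoc, ht]⟩

lemma BuP (k : ℕ) : Tu k ++ Ub k <+: itU (k+3) :=
  ((by simpa using TUpre k 0 : Tu k ++ Ub k <+: Fu k 0)).trans (FuP k)
lemma BvP (k : ℕ) : Tv k ++ Vb k <+: itV (k+2) :=
  ((by simpa using TVpre k 0 : Tv k ++ Vb k <+: Fv k 0)).trans (FvP k)

-- length and count lemmas
lemma len_sa (w : List Bool) :
    (substApply θS w).length = 3 * w.length + 2 * (w.count true) := by
  induction w with
  | nil => rfl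
  | cons x xs ih =>
    show (θS x ++ substApply θS xs).length = _
    cases x <;> simp [θS, ih, List.count_cons] <;> omega

lemma count_sa (w : List Bool) :
    (substApply θS w).count true = w.length + 2 * (w.count true) := by
  induction w with
  | nil => rfl
  | cons x xs ih =>
    show (θS x ++ substApply θS xs).count true = _
    cases x <;> simp [θS, ih, List.count_cons, List.count_append] <;> omega

lemma len_XF (z : List Bool) : (XF z).length = 3 * z.length + 2 * (z.count true) := by
  induction z with
  | nil => rfl
  | cons x xs ih =>
    show (fx x ++ XF xs).length = _
    cases x <;> simp [fx, ih, List.count_cons] <;> omega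

lemma len_YF (z : List Bool) : (YF z).length = 3 * z.length + 2 * (z.count true) := by
  induction z with
  | nil => rfl
  | cons x xs ih =>
    show (fy x ++ YF xs).length = _
    cases x <;> simp [fy, ih, List.count_cons] <;> omega

lemma len_MF (z : List Bool) : (MF z).length = 3 * z.length + 2 * (z.count true) := by
  induction z with
  | nil => rfl
  | cons x xs ih =>
    show (hz x ++ MF xs).length = _
    cases x <;> simp [hz, ih, List.count_cons] <;> omega

lemma count_MF (z : List Bool) : (MF z).count true = z.length + 2 * (z.count true) := by
  induction z with
  | nil => rfl
  | cons x xs ih =>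
    show (hz x ++ MF xs).count true = _
    cases x <;> simp [hz, ih, List.count_cons, List.count_append] <;> omega

lemma zz_facts : ∀ t, 9 * (zz t).length = 2 * 4^t + 3*t + 7 ∧
    9 * ((zz t).count true) + 3*t + 1 = 4^t := by
  intro t
  induction t with
  | zero => exact ⟨rfl, rfl⟩
  | succ t ih =>
    obtain ⟨h1, h2⟩ := ih
    have hm := MF_zz t
    have hl : (MF (zz t)).length = (zz (t+1)).length + 1 := by rw [hm]; simp
    have hc : (MF (zz t)).count true = (zz (t+1)).count true + 1 := by
      rw [hm]; simp [List.count_cons]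
    rw [len_MF] at hl
    rw [count_MF] at hc
    have hp : (4:ℕ)^(t+1) = 4 * 4^t := by ring
    constructor <;> omega

lemma eE_facts : ∀ k, 3 * (eE k).length = 2 * 4^(k+1) + 1 ∧
    3 * ((eE k).count true) + 1 = 4^(k+1) := by
  intro k
  induction k with
  | zero => exact ⟨rfl, rfl⟩
  | succ k ih =>
    obtain ⟨h1, h2⟩ := ih
    have hl : (eE (k+1)).length = 3 * (eE k).length + 2 * ((eE k).count true) := len_sa _
    have hc : (eE (k+1)).count true = (eE k).length + 2 * ((eE k).count true) := count_sa _
    have hp : (4:ℕ)^(k+1+1) = 4 * 4^(k+1) := by ring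
    constructor <;> omega

lemma len_Ub (t : ℕ) : 9 * (Ub t).length = 8 * 4^t + 3*t + 37 := by
  obtain ⟨h1, h2⟩ := zz_facts t
  have : (Ub t).length = (XF (zz t)).length + 2 := by simp [Ub]
  rw [this, len_XF]
  omega

lemma len_Vb (t : ℕ) : 9 * (Vb t).length = 8 * 4^t + 3*t + 37 := by
  obtain ⟨h1, h2⟩ := zz_facts t
  have : (Vb t).length = (YF (zz t)).length + 2 := by simp [Vb]
  rw [this, len_YF]
  omega

-- Fu lengths
def af : ℕ → ℕ
  | 0 => 0
  | (k+1) => 2 * (Fu k 0).length + af k + (eE k).length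

lemma len_Fu : ∀ k j, (Fu k j).length = af k + (Ub (k+j)).length := by
  intro k
  induction k with
  | zero => intro j; simp [Fu, af]
  | succ k ih =>
    intro j
    show (Fu k 0 ++ Fu k (j+1) ++ Fu k 0 ++ eE k).length = _
    simp only [List.length_append]
    rw [ih (j+1), ih 0]
    show _ = 2 * (Fu k 0).length + af k + (eE k).length + (Ub (k+1+j)).length
    rw [ih 0, show k+1+j = k+(j+1) by omega]
    omega

lemma len_Fv : ∀ k j, (Fv k j).length = (Fu k j).length := by
  intro k
  induction k with
  | zero =>
    intro j
    show (Vb j).length = (Ub j).length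
    have h1 := len_Ub j; have h2 := len_Vb j; omega
  | succ k ih =>
    intro j
    show (Fv k 0 ++ Fv k (j+1) ++ Fv k 0 ++ eE k).length =
      (Fu k 0 ++ Fu k (j+1) ++ Fu k 0 ++ eE k).length
    simp only [List.length_append, ih]

lemma af_facts : ∀ k, 9 * af k + 3*k + 40 = 40 * 4^k := by
  intro k
  induction k with
  | zero => rfl
  | succ k ih =>
    have hL : (Fu k 0).length = af k + (Ub k).length := by
      have := len_Fu k 0; simpa using this
    have hUb := len_Ub k
    have hE := (eE_facts k).1
    have hp : (4:ℕ)^(k+1) = 4 * 4^k := by ring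
    show 9 * (2 * (Fu k 0).length + af k + (eE k).length) + 3*(k+1) + 40 = 40 * 4^(k+1)
    omega

lemma len_Fu0 (k : ℕ) : 9 * (Fu k 0).length + 3 = 48 * 4^k := by
  have h1 : (Fu k 0).length = af k + (Ub k).length := by simpa using len_Fu k 0
  have h2 := af_facts k
  have h3 := len_Ub k
  omega

lemma len_Tu : ∀ k, 9 * (Tu k).length + 3*k + 16 = 16 * 4^k := by
  intro k
  induction k with
  | zero => rfl
  | succ k ih =>
    have h1 := len_Fu0 k
    have hp : (4:ℕ)^(k+1) = 4 * 4^k := by ring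
    show 9 * (Fu k 0 ++ Tu k).length + 3*(k+1) + 16 = 16 * 4^(k+1)
    rw [List.length_append]
    omega

lemma len_Tv : ∀ k, (Tv k).length = (Tu k).length := by
  intro k
  induction k with
  | zero => rfl
  | succ k ih =>
    show (Fv k 0 ++ Tv k).length = (Fu k 0 ++ Tu k).length
    simp [ih, len_Fv]

-- coincidence counting
def cw (A B : List Bool) : ℕ := (List.zipWith (· == ·) A B).count true

lemma cw_append {A B : List Bool} (C D : List Bool) (h : A.length = B.length) :
    cw (A ++ C) (B ++ D) = cw A B + cw C D := by
  unfold cw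
  rw [List.zipWith_append h, List.count_append]

lemma cw_self (w : List Bool) : cw w w = w.length := by
  induction w with
  | nil => rfl
  | cons x xs ih =>
    simp [cw, List.count_cons] at ih ⊢
    all_goals omega

lemma cwZ : ∀ (z : List Bool) (s : Bool),
    cw (XF z ++ [true,true]) (true :: s :: YF z) = z.length + 1 + s.toNat := by
  intro z
  induction z with
  | nil => intro s; cases s <;> rfl
  | cons x xs ih =>
    intro s
    show cw (fx x ++ XF xs ++ [true,true]) (true :: s :: (fy x ++ YF xs)) = _
    cases x
    · have e1 : true :: s :: (fy false ++ YF xs) =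
          [true, s, false] ++ (true :: false :: YF xs) := by simp [fy]
      rw [List.append_assoc, e1,
        cw_append (XF xs ++ [true,true]) (true :: false :: YF xs) (by simp [fx]),
        ih false]
      cases s <;> simp [cw, fx, List.count_cons] <;> omega
    · have e1 : true :: s :: (fy true ++ YF xs) =
          [true, s, true, true, false] ++ (true :: false :: YF xs) := by simp [fy]
      rw [List.append_assoc, e1,
        cw_append (XF xs ++ [true,true]) (true :: false :: YF xs) (by simp [fx]),
        ih false]
      cases s <;> simp [cw, fx, List.count_cons] <;> omega

lemma cw_UbVb (t : ℕ) : cw (Ub t) (Vb t) = (zz t).length + 2 := by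
  have := cwZ (zz t) true
  show cw (XF (zz t) ++ [true,true]) ([true,true] ++ YF (zz t)) = _
  simpa using this

def bf : ℕ → ℕ
  | 0 => 0
  | (k+1) => 2 * cw (Fu k 0) (Fv k 0) + bf k + (eE k).length

lemma cw_F : ∀ k j, cw (Fu k j) (Fv k j) = bf k + ((zz (k+j)).length + 2) := by
  intro k
  induction k with
  | zero => intro j; simpa [Fu, Fv, bf] using cw_UbVb j
  | succ k ih =>
    intro j
    show cw (Fu k 0 ++ Fu k (j+1) ++ Fu k 0 ++ eE k)
        (Fv k 0 ++ Fv k (j+1) ++ Fv k 0 ++ eE k) = _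
    rw [cw_append (eE k) (eE k) (by simp [len_Fv]),
        cw_append (Fu k 0) (Fv k 0) (by simp [len_Fv]),
        cw_append (Fu k (j+1)) (Fv k (j+1)) (len_Fv k 0).symm,
        cw_self, ih 0, ih (j+1)]
    show _ = 2 * cw (Fu k 0) (Fv k 0) + bf k + (eE k).length + ((zz (k+1+j)).length + 2)
    rw [ih 0, show k+1+j = k+(j+1) by omega]
    omega

lemma bf_facts : ∀ k, 9 * bf k + 3*k + 28 = 28 * 4^k := by
  intro k
  induction k with
  | zero => rfl
  | succ k ih =>
    have hC : cw (Fu k 0) (Fv k 0) = bf k + ((zz k).length + 2) := by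
      simpa using cw_F k 0
    have hz := (zz_facts k).1
    have hE := (eE_facts k).1
    have hp : (4:ℕ)^(k+1) = 4 * 4^k := by ring
    show 9 * (2 * cw (Fu k 0) (Fv k 0) + bf k + (eE k).length) + 3*(k+1) + 28 = 28 * 4^(k+1)
    omega

lemma cw_F0 (k : ℕ) : 9 * cw (Fu k 0) (Fv k 0) + 3 = 30 * 4^k := by
  have hC : cw (Fu k 0) (Fv k 0) = bf k + ((zz k).length + 2) := by simpa using cw_F k 0
  have h1 := bf_facts k
  have h2 := (zz_facts k).1
  omega

lemma cw_T : ∀ k, 9 * cw (Tu k) (Tv k) + 3*k + 10 = 10 * 4^k := by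
  intro k
  induction k with
  | zero => rfl
  | succ k ih =>
    have h1 := cw_F0 k
    have hp : (4:ℕ)^(k+1) = 4 * 4^k := by ring
    show 9 * cw (Fu k 0 ++ Tu k) (Fv k 0 ++ Tv k) + 3*(k+1) + 10 = 10 * 4^(k+1)
    rw [cw_append _ _ (len_Fv k 0).symm]
    omega

lemma cw_B (k : ℕ) : 9 * cw (Tu k ++ Ub k) (Tv k ++ Vb k) = 12 * 4^k + 15 := by
  rw [cw_append _ _ (len_Tv k).symm, cw_UbVb]
  have h1 := cw_T k
  have h2 := (zz_facts k).1
  omega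

lemma len_B (k : ℕ) : 3 * (Tu k ++ Ub k).length = 8 * 4^k + 7 := by
  rw [List.length_append]
  have h1 := len_Tu k
  have h2 := len_Ub k
  omega

lemma len_Bv (k : ℕ) : (Tv k ++ Vb k).length = (Tu k ++ Ub k).length := by
  simp only [List.length_append, len_Tv]
  have h1 := len_Ub k; have h2 := len_Vb k
  omega

lemma pref_get {l₁ l₂ : List Bool} (h : l₁ <+: l₂) {i : ℕ} (hi : i < l₁.length) :
    l₂[i]'(lt_of_lt_of_le hi h.length_le) = l₁[i] := by
  obtain ⟨t, rfl⟩ := h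
  exact List.getElem_append_left hi

lemma cwMap (u v : ℕ → Bool) : ∀ n, cw ((List.range n).map u) ((List.range n).map v)
    = ((Finset.range n).filter (fun k => u k = v k)).card := by
  intro n
  induction n with
  | zero => rfl
  | succ n ih =>
    rw [List.range_succ, List.map_append, List.map_append,
        cw_append _ _ (by simp), ih, Finset.range_add_one, Finset.filter_insert]
    have hn : n ∉ (Finset.range n).filter (fun k => u k = v k) := by simp
    have hcw : cw [u n] [v n] = if u n = v n then 1 else 0 := by
      cases hun : u n <;> cases hvn : v n <;> simp [cw]
    simp only [List.map_cons, List.map_nil]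
    by_cases h : u n = v n
    · rw [if_pos h, Finset.card_insert_of_notMem hn, hcw, if_pos h]
    · rw [if_neg h, hcw, if_neg h]
      omega

lemma card_formula (u v : ℕ → Bool) (A B : List Bool)
    (hA : ∀ i (h : i < A.length), A[i] = u i)
    (hB : ∀ i (h : i < B.length), B[i] = v i)
    (hl : B.length = A.length) :
    ((Finset.range A.length).filter (fun k => u k = v k)).card = cw A B := by
  have eA : A = (List.range A.length).map u := by
    apply List.ext_getElem (by simp)
    intro i h1 h2
    simp only [List.getElem_map, List.getElem_range]
    exact hA i h1
  have eB : B = (List.range A.length).map v := by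
    apply List.ext_getElem (by simp [hl])
    intro i h1 h2
    simp only [List.getElem_map, List.getElem_range]
    exact hB i h1
  calc ((Finset.range A.length).filter (fun k => u k = v k)).card
      = cw ((List.range A.length).map u) ((List.range A.length).map v) := (cwMap u v _).symm
    _ = cw A B := by rw [← eA, ← eB]

/-- **application of the main theorem.** For `θ : 0 ↦ 010, 1 ↦ 11010`
with fixed points `u* = θ^∞(0)`, `v* = θ^∞(1)`, the coincidence density
`lim (1/n)·#{k ≤ n : u*_k = v*_k}` does not exist. -/
theorem salem_coincidence_density_does_not_exist
    (u v : ℕ → Bool) (hu : IsFixPt θS false u) (hv : IsFixPt θS true v) :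
    ¬ ∃ c : ℝ, Tendsto (fun n : ℕ =>
        (((Finset.range n).filter (fun k => u k = v k)).card : ℝ) / n)
      atTop (nhds c) := by
  rintro ⟨c, hc⟩
  set f : ℕ → ℝ := fun n : ℕ =>
    (((Finset.range n).filter (fun k => u k = v k)).card : ℝ) / n with hf
  -- realization lemmas
  have hrealU : ∀ m (A : List Bool), A <+: itU m → ∀ i (h : i < A.length), A[i] = u i := by
    intro m A hA i hi
    have h2 : i < (itU m).length := lt_of_lt_of_le hi hA.length_le
    have h3 := hu m i h2
    rw [h3]
    exact (pref_get hA hi).symm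
  have hrealV : ∀ m (A : List Bool), A <+: itV m → ∀ i (h : i < A.length), A[i] = v i := by
    intro m A hA i hi
    have h2 : i < (itV m).length := lt_of_lt_of_le hi hA.length_le
    have h3 := hv m i h2
    rw [h3]
    exact (pref_get hA hi).symm
  have pow_ge : ∀ k : ℕ, k + 1 ≤ 4^k := by
    intro k
    have : k < 4^k := Nat.lt_pow_self (n := k) (a := 4) (by norm_num)
    omega
  -- Family A
  have hcardA : ∀ k, ((Finset.range ((Fu k 0).length)).filter (fun i => u i = v i)).card
      = cw (Fu k 0) (Fv k 0) := by
    intro k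
    exact card_formula u v _ _ (hrealU _ _ (FuP k)) (hrealV _ _ (FvP k)) (len_Fv k 0)
  have tendA : Tendsto (fun k => (Fu k 0).length) atTop atTop := by
    apply tendsto_atTop_mono (f := fun k => k) _ tendsto_id
    intro k
    show k ≤ (Fu k 0).length
    have h1 := len_Fu0 k
    have h2 := pow_ge k
    omega
  have hcompA : Tendsto (fun k => f ((Fu k 0).length)) atTop (nhds c) := hc.comp tendA
  have boundA : ∀ k, (3:ℝ)/5 ≤ f ((Fu k 0).length) := by
    intro k
    have h1 := len_Fu0 k
    have h2 := cw_F0 k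
    have h3 := pow_ge k
    have hlen_pos : 0 < (Fu k 0).length := by omega
    have hineq : 3 * (Fu k 0).length ≤ 5 * cw (Fu k 0) (Fv k 0) := by omega
    have : f ((Fu k 0).length)
        = (cw (Fu k 0) (Fv k 0) : ℝ) / ((Fu k 0).length : ℝ) := by
      rw [hf]
      simp only []
      rw [hcardA k]
    rw [this, div_le_div_iff₀ (by norm_num) (by exact_mod_cast hlen_pos)]
    have hR : (3:ℝ) * (Fu k 0).length ≤ 5 * (cw (Fu k 0) (Fv k 0)) := by exact_mod_cast hineq
    linarith
  have h35 : (3:ℝ)/5 ≤ c := ge_of_tendsto' hcompA boundA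
  -- Family B
  have hcardB : ∀ k, ((Finset.range ((Tu k ++ Ub k).length)).filter (fun i => u i = v i)).card
      = cw (Tu k ++ Ub k) (Tv k ++ Vb k) := by
    intro k
    exact card_formula u v _ _ (hrealU _ _ (BuP k)) (hrealV _ _ (BvP k)) (len_Bv k)
  have tendB : Tendsto (fun k => (Tu k ++ Ub k).length) atTop atTop := by
    apply tendsto_atTop_mono (f := fun k => k) _ tendsto_id
    intro k
    show k ≤ (Tu k ++ Ub k).length
    have h1 := len_B k
    have h2 := pow_ge k
    omega
  have hcompB : Tendsto (fun k => f ((Tu k ++ Ub k).length)) atTop (nhds c) := hc.comp tendB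
  have boundB : ∀ᶠ k in atTop, f ((Tu k ++ Ub k).length) ≤ (5:ℝ)/9 := by
    rw [eventually_atTop]
    refine ⟨1, fun k hk => ?_⟩
    have h1 := len_B k
    have h2 := cw_B k
    have h3 : (4:ℕ) ≤ 4^k := by
      calc (4:ℕ) = 4^1 := rfl
      _ ≤ 4^k := Nat.pow_le_pow_right (by norm_num) hk
    have hlen_pos : 0 < (Tu k ++ Ub k).length := by omega
    have hineq : 9 * cw (Tu k ++ Ub k) (Tv k ++ Vb k) ≤ 5 * (Tu k ++ Ub k).length := by omega
    have heq : f ((Tu k ++ Ub k).length)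
        = (cw (Tu k ++ Ub k) (Tv k ++ Vb k) : ℝ) / ((Tu k ++ Ub k).length : ℝ) := by
      rw [hf]
      simp only []
      rw [hcardB k]
    rw [heq, div_le_div_iff₀ (by exact_mod_cast hlen_pos) (by norm_num)]
    have hR : (9:ℝ) * (cw (Tu k ++ Ub k) (Tv k ++ Vb k)) ≤ 5 * (Tu k ++ Ub k).length := by
      exact_mod_cast hineq
    linarith
  have h59 : c ≤ (5:ℝ)/9 := le_of_tendsto hcompB boundB
  have : (3:ℝ)/5 ≤ (5:ℝ)/9 := le_trans h35 h59
  norm_num at this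
end

section
/- Let θ be a primitive substitution on {0,1} with θ(0) beginning with 0 and θ(1) beginning with 1, whose substitution matrix M_θ is primitive with Perron–Frobenius eigenvalue λ and has an eigenvector (p,q)ᵀ with p, q positive integers for λ. Define the alphabet Ȧ = {a₁,…,a_p, b₁,…,b_q}, the morphism γ: {0,1}* → Ȧ* by γ(0) = a₁⋯a_p, γ(1) = b₁⋯b_q, and the substitution θ̇ on Ȧ by θ̇(a_k) = γ(θ(0))[(k−1)λ+1, kλ] for 1 ≤ k ≤ p and θ̇(b_ℓ) = γ(θ(1))[(ℓ−1)λ+1, ℓλ] for 1 ≤ ℓ ≤ q. Then θ̇ is well defined (i.e., |γ(θ(0))| = pλ and |γ(θ(1))| = qλ), θ̇ has constant length λ, and γ ∘ θ = θ̇ ∘ γ on {0,1}*. -/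
open Matrix

/-- A morphism between free monoids, extended to words by concatenation. -/
def morphApply {α β : Type*} (σ : α → List β) (w : List α) : List β := w.flatMap σ

/-- The substitution matrix of `θ`: the `(i,j)` entry is the number of occurrences of
letter `j` in `θ(i)` (letter `0 = false`, letter `1 = true`). -/
def substMatrix (θ : Bool → List Bool) : Matrix (Fin 2) (Fin 2) ℕ :=
  !![(θ false).count false, (θ false).count true;
     (θ true).count false, (θ true).count true]

/-- The morphism `γ : {0,1}* → Ȧ*` on the alphabet `Ȧ = {a₁,…,a_p} ⊔ {b₁,…,b_q}`,
sending `0 ↦ a₁⋯a_p` and `1 ↦ b₁⋯b_q`. -/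
def gam (p q : ℕ) : Bool → List (Fin p ⊕ Fin q) := fun b =>
  if b then List.ofFn (fun l : Fin q => Sum.inr l) else List.ofFn (fun k : Fin p => Sum.inl k)

/-- The substitution `θ̇` on `Ȧ`: `θ̇(a_k)` is the `k`-th block of length `λ` of
`γ(θ(0))` (i.e. `γ(θ(0))[(k−1)λ+1, kλ]` in `1`-based notation), and similarly
`θ̇(b_ℓ)` is the `ℓ`-th block of length `λ` of `γ(θ(1))`. -/
def thdot (θ : Bool → List Bool) (p q lam : ℕ) : (Fin p ⊕ Fin q) → List (Fin p ⊕ Fin q)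
  | Sum.inl k => ((morphApply (gam p q) (θ false)).drop ((k : ℕ) * lam)).take lam
  | Sum.inr l => ((morphApply (gam p q) (θ true)).drop ((l : ℕ) * lam)).take lam

lemma len_morph (p q : ℕ) (w : List Bool) :
    (morphApply (gam p q) w).length = w.count false * p + w.count true * q := by
  induction w with
  | nil => simp [morphApply]
  | cons a w ih =>
    have h : morphApply (gam p q) (a :: w) = gam p q a ++ morphApply (gam p q) w := rfl
    rw [h, List.length_append, ih]
    cases a <;> simp [gam, List.count_cons] <;> ring

lemma blocks_join {α : Type*} (lam : ℕ) (L : List α) :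
    ∀ n : ℕ, (List.ofFn (fun k : Fin n => (L.drop ((k : ℕ) * lam)).take lam)).flatten
      = L.take (n * lam)
  | 0 => by simp
  | n + 1 => by
    rw [List.ofFn_succ', List.concat_eq_append, List.flatten_append]
    simp only [Fin.coe_castSucc, Fin.val_last, List.flatten_cons, List.flatten_nil,
      List.append_nil]
    rw [blocks_join lam L n, Nat.succ_mul, List.take_add]

/-- **construction in the proof of Proposition 1.** Let `θ` be a
primitive substitution on `{0,1}` with `θ(0) = 0⋯`, `θ(1) = 1⋯`, whose (primitive)
substitution matrix has an eigenvector `(p,q)ᵀ` with positive integer entries for the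
Perron–Frobenius eigenvalue `λ`.  Then `θ̇` is well defined (`|γ(θ(0))| = pλ` and
`|γ(θ(1))| = qλ`), `θ̇` has constant length `λ`, and `γ ∘ θ = θ̇ ∘ γ` on `{0,1}*`. -/
theorem constant_length_rewriting
    (θ : Bool → List Bool) (p q lam : ℕ) (hp : 0 < p) (hq : 0 < q)
    (hprim : ∃ k : ℕ, ∀ i j : Fin 2, 0 < ((substMatrix θ) ^ k) i j)
    (hs0 : (θ false).head? = some false) (hs1 : (θ true).head? = some true)
    (heig : (substMatrix θ).mulVec ![p, q] = lam • ![p, q]) :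
    (morphApply (gam p q) (θ false)).length = p * lam ∧
    (morphApply (gam p q) (θ true)).length = q * lam ∧
    (∀ c : Fin p ⊕ Fin q, (thdot θ p q lam c).length = lam) ∧
    (∀ w : List Bool,
      morphApply (gam p q) (substApply θ w)
        = substApply (thdot θ p q lam) (morphApply (gam p q) w)) := by
  have h0 := congrFun heig 0
  have h1 := congrFun heig 1
  simp [substMatrix, mulVec, dotProduct, Fin.sum_univ_two, Matrix.smul_apply] at h0 h1
  have len0 : (morphApply (gam p q) (θ false)).length = p * lam := by
    rw [len_morph, h0]; ring
  have len1 : (morphApply (gam p q) (θ true)).length = q * lam := by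
    rw [len_morph, h1]; ring
  have hconst : ∀ c : Fin p ⊕ Fin q, (thdot θ p q lam c).length = lam := by
    rintro (k | l)
    · simp only [thdot, List.length_take, List.length_drop, len0]
      have hk1 : (k : ℕ) * lam + lam ≤ p * lam := by
        have := Nat.mul_le_mul_right lam k.2
        simpa [Nat.succ_mul] using this
      omega
    · simp only [thdot, List.length_take, List.length_drop, len1]
      have hk1 : (l : ℕ) * lam + lam ≤ q * lam := by
        have := Nat.mul_le_mul_right lam l.2
        simpa [Nat.succ_mul] using this
      omega
  refine ⟨len0, len1, hconst, ?_⟩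
  have key : ∀ b : Bool, morphApply (gam p q) (θ b)
      = substApply (thdot θ p q lam) (gam p q b) := by
    intro b
    cases b
    · calc morphApply (gam p q) (θ false)
          = (morphApply (gam p q) (θ false)).take (p * lam) := by
            rw [← len0, List.take_length]
        _ = (List.ofFn (fun k : Fin p =>
              ((morphApply (gam p q) (θ false)).drop ((k : ℕ) * lam)).take lam)).flatten := by
            rw [blocks_join]
        _ = substApply (thdot θ p q lam) (gam p q false) := by
            simp [substApply, gam, List.flatMap_def, List.map_ofFn]; rfl
    · calc morphApply (gam p q) (θ true)
          = (morphApply (gam p q) (θ true)).take (q * lam) := by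
            rw [← len1, List.take_length]
        _ = (List.ofFn (fun l : Fin q =>
              ((morphApply (gam p q) (θ true)).drop ((l : ℕ) * lam)).take lam)).flatten := by
            rw [blocks_join]
        _ = substApply (thdot θ p q lam) (gam p q true) := by
            simp [substApply, gam, List.flatMap_def, List.map_ofFn]; rfl
  intro w
  induction w with
  | nil => simp [morphApply, substApply]
  | cons a w ih =>
    simp only [substApply, morphApply, List.flatMap_cons, List.flatMap_append]
    rw [← substApply, ← morphApply, ← morphApply, ih, ← substApply, key a]
    rfl
end
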